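/- arXiv:2203.15907 — 2 statements merged into one kernel-verified Lean document; each statement's English description precedes it below -/
import Mathlib

section
/- Let 𝓑 ⊂ {1,...,N}, let 𝓔 be the σ-algebra generated by {X_n : n ∈ 𝓑}, and for an integer m ≥ 2 let q_n(m | 𝓔) be the second largest among the conditional probabilities P(Y_n ≡ j mod m | 𝓔), j = 0,1,...,m−1. Then there exists a constant A ≥ 1, depending only on K and the ellipticity constant C, such that for every n ∉ 𝓑 and almost every sample point: A^{-1} q_n(m) ≤ q_n(m | 𝓔) ≤ A q_n(m). -/
open MeasureTheory ProbabilityTheory Filter Finset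
open scoped ENNReal Topology

noncomputable section

namespace EdgeworthMC

variable {Ω E : Type*} [MeasurableSpace Ω] [MeasurableSpace E]

/-- The standard Gaussian density `𝔤(u) = (2π)^{-1/2} e^{-u²/2}`. -/
def gaussDensity (u : ℝ) : ℝ := (Real.sqrt (2 * Real.pi))⁻¹ * Real.exp (-u ^ 2 / 2)

/-- `UEChain μ X κ C` : the process `X` is a Markov chain (with respect to the probability
measure `μ`) with transition kernels `κ n` from the state at time `n` to the state at time
`n+1`, and the chain is uniformly elliptic with ellipticity constant `C`:
`C⁻¹ ℙ(X_{n+1} ∈ A) ≤ ℙ(X_{n+1} ∈ A | X_n = x) ≤ C ℙ(X_{n+1} ∈ A)` for a.e. `x`. -/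
def UEChain (μ : Measure Ω) (X : ℕ → Ω → E) (κ : ℕ → Kernel E E) (C : ℝ) : Prop :=
  IsProbabilityMeasure μ ∧
  (∀ n, Measurable (X n)) ∧
  (∀ n, IsMarkovKernel (κ n)) ∧
  (∀ n (A : Set E), MeasurableSet A →
      (μ[fun ω => A.indicator (fun _ => (1 : ℝ)) (X (n + 1) ω) |
          ⨆ i : Fin (n + 1), MeasurableSpace.comap (X i) (inferInstance : MeasurableSpace E)]
        =ᵐ[μ] fun ω => (κ n (X n ω) A).toReal)) ∧
  (∀ n (A : Set E), MeasurableSet A → ∀ᵐ ω ∂μ,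
      κ n (X n ω) A ≤ ENNReal.ofReal C * Measure.map (X (n + 1)) μ A ∧
      Measure.map (X (n + 1)) μ A ≤ ENNReal.ofReal C * κ n (X n ω) A)

/-- Partial sums `S_N = ∑_{n=1}^N f_n(X_n)`. -/
def S (X : ℕ → Ω → E) (f : ℕ → E → ℤ) (N : ℕ) (ω : Ω) : ℤ :=
  ∑ n ∈ Finset.Icc 1 N, f n (X n ω)

/-- `V_N = Var(S_N)`. -/
def VN (μ : Measure Ω) (X : ℕ → Ω → E) (f : ℕ → E → ℤ) (N : ℕ) : ℝ :=
  variance (fun ω => ((S X f N ω : ℝ))) μ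

/-- `σ_N = √V_N`. -/
def sigN (μ : Measure Ω) (X : ℕ → Ω → E) (f : ℕ → E → ℤ) (N : ℕ) : ℝ :=
  Real.sqrt (VN μ X f N)

/-- `a_N = 𝔼(S_N)`. -/
def meanS (μ : Measure Ω) (X : ℕ → Ω → E) (f : ℕ → E → ℤ) (N : ℕ) : ℝ :=
  ∫ ω, ((S X f N ω : ℝ)) ∂μ

/-- The second largest value among the (finitely many) values of `p`, counted with
multiplicity: it equals `min_j max_{j' ≠ j} p j'`. -/
def secondLargest {ι : Type*} (p : ι → ℝ) : ℝ := ⨅ j, sSup (p '' {j}ᶜ)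

/-- `q_n(m)` : the second largest value among `ℙ(Y_n ≡ j mod m)`, `j = 0,…,m-1`. -/
def qres (μ : Measure Ω) (X : ℕ → Ω → E) (f : ℕ → E → ℤ) (n m : ℕ) : ℝ :=
  secondLargest (fun j : ZMod m => (μ {ω | ((f n (X n ω) : ZMod m)) = j}).toReal)

/-- `M_N = min_{2 ≤ m ≤ 2K} ∑_{n=1}^N q_n(m)`. -/
def MN (μ : Measure Ω) (X : ℕ → Ω → E) (f : ℕ → E → ℤ) (K N : ℕ) : ℝ :=
  sInf ((fun m => ∑ n ∈ Finset.Icc 1 N, qres μ X f n m) '' (Set.Icc 2 (2 * K)))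

/-- `S_N` obeys the Edgeworth expansion of order `r` : there are polynomials `P_{b,N}`,
with coefficients uniformly bounded in `N` and degrees not depending on `N`, such that
uniformly in `k ∈ ℤ`,
`ℙ(S_N = k) = ∑_{b=1}^r σ_N^{-b} P_{b,N}(k_N) 𝔤(k_N) + o(σ_N^{-r})`
where `k_N = (k - 𝔼 S_N)/σ_N`. -/
def Edgeworth (μ : Measure Ω) (X : ℕ → Ω → E) (f : ℕ → E → ℤ) (r : ℕ) : Prop :=
  ∃ (D : ℕ) (Cb : ℝ) (P : ℕ → ℕ → Polynomial ℝ),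
    (∀ b N, (P b N).natDegree ≤ D) ∧
    (∀ b N i, |(P b N).coeff i| ≤ Cb) ∧
    ∀ ε > 0, ∃ N₀, ∀ N ≥ N₀, ∀ k : ℤ,
      |(μ {ω | S X f N ω = k}).toReal -
          ∑ b ∈ Finset.Icc 1 r, (sigN μ X f N)⁻¹ ^ b *
            (P b N).eval (((k : ℝ) - meanS μ X f N) / sigN μ X f N) *
            gaussDensity (((k : ℝ) - meanS μ X f N) / sigN μ X f N)|
        ≤ ε * (sigN μ X f N)⁻¹ ^ r

/-- The σ-algebra generated by `X_{j 1}, …, X_{j ℓ}`. -/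
def sigmaOf (X : ℕ → Ω → E) {ℓ : ℕ} (j : Fin ℓ → ℕ) : MeasurableSpace Ω :=
  ⨆ i : Fin ℓ, MeasurableSpace.comap (X (j i)) (inferInstance : MeasurableSpace E)

/-- Conditional probability of the event `s` given the σ-algebra `m`. -/
def condProb (μ : Measure Ω) (m : MeasurableSpace Ω) (s : Set Ω) : Ω → ℝ :=
  μ[s.indicator (fun _ => (1 : ℝ)) | m]

/-- `S_N` obeys the Edgeworth expansion of order `r` in a conditionally stable way:
for every `ℓ`, the order `r` Edgeworth expansion holds for the conditional law of `S_N`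
given `X_{j_1},…,X_{j_ℓ}`, with error term `o_ℓ(σ_N^{-r})` and polynomial coefficient
bounds depending only on `ℓ` (and `r`), uniformly over all choices of indices
`1 ≤ j_1,…,j_ℓ ≤ N`. -/
def CondStableEdgeworth (μ : Measure Ω) (X : ℕ → Ω → E) (f : ℕ → E → ℤ) (r : ℕ) : Prop :=
  ∀ ℓ : ℕ, ∃ (D : ℕ) (Cb : ℝ), ∀ ε > 0, ∃ N₀, ∀ N ≥ N₀,
    ∀ j : Fin ℓ → ℕ, (∀ i, j i ∈ Finset.Icc 1 N) →
      ∃ P : ℕ → Ω → Polynomial ℝ,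
        (∀ b ω, (P b ω).natDegree ≤ D) ∧
        (∀ b ω i, |(P b ω).coeff i| ≤ Cb) ∧
        ∀ᵐ ω ∂μ, ∀ k : ℤ,
          |condProb μ (sigmaOf X j) {ω' | S X f N ω' = k} ω -
              ∑ b ∈ Finset.Icc 1 r, (sigN μ X f N)⁻¹ ^ b *
                (P b ω).eval (((k : ℝ) -
                    (μ[fun ω' => ((S X f N ω' : ℝ)) | sigmaOf X j]) ω) / sigN μ X f N) *
                gaussDensity (((k : ℝ) -
                    (μ[fun ω' => ((S X f N ω' : ℝ)) | sigmaOf X j]) ω) / sigN μ X f N)|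
            ≤ ε * (sigN μ X f N)⁻¹ ^ r

/-- `t` is a resonant point: `t = 2πl/m` with `0 < m ≤ 2K`, `0 ≤ l < m`. -/
def IsResonant (K : ℕ) (t : ℝ) : Prop :=
  ∃ l m : ℕ, 0 < m ∧ m ≤ 2 * K ∧ l < m ∧ t = 2 * Real.pi * l / m

/-- The conditional characteristic function `𝔼[e^{itS_N} | X_{j_1},…,X_{j_ℓ}]`. -/
def condChar (μ : Measure Ω) (X : ℕ → Ω → E) (f : ℕ → E → ℤ) (t : ℝ) (N : ℕ)
    {ℓ : ℕ} (j : Fin ℓ → ℕ) : Ω → ℂ :=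
  μ[fun ω => Complex.exp (Complex.I * (t : ℂ) * ((S X f N ω : ℤ) : ℂ)) | sigmaOf X j]

end EdgeworthMC

namespace EdgeworthMC

variable {Ω E : Type*} [MeasurableSpace Ω] [MeasurableSpace E]

/-- The σ-algebra `𝓔` generated by `{X_n : n ∈ 𝓑}`. -/
def sigmaFinset (X : ℕ → Ω → E) (𝓑 : Finset ℕ) : MeasurableSpace Ω :=
  ⨆ n ∈ 𝓑, MeasurableSpace.comap (X n) (inferInstance : MeasurableSpace E)

/-- `q_n(m | 𝓔)(ω)` : the second largest among the conditional probabilities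
`ℙ(Y_n ≡ j mod m | 𝓔)`, `j = 0,…,m-1`. -/
def condQres (μ : Measure Ω) (X : ℕ → Ω → E) (f : ℕ → E → ℤ)
    (𝓔 : MeasurableSpace Ω) (n mm : ℕ) (ω : Ω) : ℝ :=
  secondLargest (fun j : ZMod mm =>
    (μ[Set.indicator {ω' | ((f n (X n ω') : ZMod mm)) = j} (fun _ => (1 : ℝ)) | 𝓔]) ω)

set_option linter.unusedSectionVars false
set_option linter.unusedVariables false
set_option maxHeartbeats 1000000

open scoped NNReal symmDiff

def Ft (X : ℕ → Ω → E) (t : ℕ) : MeasurableSpace Ω :=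
  ⨆ i : Fin (t + 1), MeasurableSpace.comap (X i) inferInstance

lemma Ft_le_ambient {X : ℕ → Ω → E} (hX : ∀ n, Measurable (X n)) (t : ℕ) :
    Ft X t ≤ ‹MeasurableSpace Ω› :=
  iSup_le fun _ => (hX _).comap_le

lemma comap_le_Ft {X : ℕ → Ω → E} {j t : ℕ} (hj : j ≤ t) :
    MeasurableSpace.comap (X j) inferInstance ≤ Ft X t := by
  have : MeasurableSpace.comap (X ((⟨j, by omega⟩ : Fin (t+1)) : ℕ)) inferInstance ≤ Ft X t :=
    le_iSup (fun i : Fin (t+1) => MeasurableSpace.comap (X i) inferInstance) ⟨j, by omega⟩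
  simpa using this

lemma Ft_mono {X : ℕ → Ω → E} : Monotone (Ft X) := by
  intro s t hst
  exact iSup_le fun i => comap_le_Ft (by omega)

lemma measurableSet_preimage_Ft {X : ℕ → Ω → E} {j t : ℕ} (hj : j ≤ t) {B : Set E}
    (hB : MeasurableSet B) : MeasurableSet[Ft X t] (X j ⁻¹' B) :=
  comap_le_Ft hj _ ⟨B, hB, rfl⟩


section Extension

variable {Ω : Type*}

/-- Finite unions of "products" `U ∩ V` with `U ∈ m₁`, `V ∈ m₂`. -/
def ProdAlg (m₁ m₂ : MeasurableSpace Ω) : Set (Set Ω) :=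
  {S | ∃ (ι : Type) (_ : Fintype ι) (U V : ι → Set Ω),
    (∀ i, MeasurableSet[m₁] (U i)) ∧ (∀ i, MeasurableSet[m₂] (V i)) ∧ S = ⋃ i, U i ∩ V i}

variable {m0 m₁ m₂ : MeasurableSpace Ω}

lemma prodAlg_empty : (∅ : Set Ω) ∈ ProdAlg m₁ m₂ :=
  ⟨PEmpty, inferInstance, fun i => i.elim, fun i => i.elim, fun i => i.elim, fun i => i.elim,
    (Set.iUnion_of_empty _).symm⟩

lemma prodAlg_of_prod {U V : Set Ω} (hU : MeasurableSet[m₁] U) (hV : MeasurableSet[m₂] V) :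
    U ∩ V ∈ ProdAlg m₁ m₂ :=
  ⟨PUnit, inferInstance, fun _ => U, fun _ => V, fun _ => hU, fun _ => hV, (Set.iUnion_const _).symm⟩

lemma prodAlg_inter {S S' : Set Ω} (hS : S ∈ ProdAlg m₁ m₂) (hS' : S' ∈ ProdAlg m₁ m₂) :
    S ∩ S' ∈ ProdAlg m₁ m₂ := by
  obtain ⟨ι, hι, U, V, hU, hV, rfl⟩ := hS
  obtain ⟨ι', hι', U', V', hU', hV', rfl⟩ := hS'
  refine ⟨ι × ι', @instFintypeProd ι ι' hι hι', fun p => U p.1 ∩ U' p.2,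
    fun p => V p.1 ∩ V' p.2, fun p => (hU p.1).inter (hU' p.2),
    fun p => (hV p.1).inter (hV' p.2), ?_⟩
  ext x
  simp only [Set.mem_inter_iff, Set.mem_iUnion, Set.mem_inter_iff, Prod.exists]
  constructor
  · rintro ⟨⟨i, hi1, hi2⟩, ⟨j, hj1, hj2⟩⟩
    exact ⟨i, j, ⟨hi1, hj1⟩, ⟨hi2, hj2⟩⟩
  · rintro ⟨i, j, ⟨hi1, hj1⟩, ⟨hi2, hj2⟩⟩
    exact ⟨⟨i, hi1, hi2⟩, ⟨j, hj1, hj2⟩⟩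

lemma prodAlg_compl {S : Set Ω} (hS : S ∈ ProdAlg m₁ m₂) : Sᶜ ∈ ProdAlg m₁ m₂ := by
  classical
  obtain ⟨ι, hι, U, V, hU, hV, rfl⟩ := hS
  haveI := hι
  refine ⟨ι → Bool, inferInstance,
    fun σ => ⋂ i, (if σ i then (U i)ᶜ else Set.univ),
    fun σ => ⋂ i, (if σ i then Set.univ else (V i)ᶜ),
    fun σ => MeasurableSet.iInter fun i => by
      by_cases h : σ i <;> simp [h, (hU i).compl, MeasurableSet.univ],
    fun σ => MeasurableSet.iInter fun i => by
      by_cases h : σ i <;> simp [h, (hV i).compl, MeasurableSet.univ], ?_⟩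
  ext x
  simp only [Set.mem_compl_iff, Set.mem_iUnion, Set.mem_inter_iff, Set.mem_iInter,
    not_exists, not_and]
  constructor
  · intro h
    refine ⟨fun i => decide (x ∉ U i), fun i => ?_, fun i => ?_⟩
    · by_cases hx : x ∈ U i <;> simp [hx]
    · by_cases hx : x ∈ U i
      · simp [hx, h i hx]
      · simp [hx]
  · rintro ⟨σ, h1, h2⟩ i hxU
    have hσ : σ i = false := by
      by_contra h
      have := h1 i
      rw [if_pos (by simpa using h)] at this
      exact this hxU
    have := h2 i
    rw [if_neg (by simp [hσ])] at this
    exact this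

lemma prodAlg_union {S S' : Set Ω} (hS : S ∈ ProdAlg m₁ m₂) (hS' : S' ∈ ProdAlg m₁ m₂) :
    S ∪ S' ∈ ProdAlg m₁ m₂ := by
  have := prodAlg_compl (prodAlg_inter (prodAlg_compl hS) (prodAlg_compl hS'))
  rwa [← Set.compl_union, compl_compl] at this

lemma prodAlg_biUnion_range {T : ℕ → Set Ω} (hT : ∀ i, T i ∈ ProdAlg m₁ m₂) (M : ℕ) :
    (⋃ i ∈ Finset.range M, T i) ∈ ProdAlg m₁ m₂ := by
  induction M with
  | zero => simpa using prodAlg_empty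
  | succ M ih =>
      rw [Finset.range_add_one]
      rw [Finset.set_biUnion_insert]
      exact prodAlg_union (hT M) ih

lemma prodAlg_measurableSet (hm₁ : m₁ ≤ m0) (hm₂ : m₂ ≤ m0) {S : Set Ω}
    (hS : S ∈ ProdAlg m₁ m₂) : MeasurableSet[m0] S := by
  obtain ⟨ι, hι, U, V, hU, hV, rfl⟩ := hS
  haveI := hι
  exact MeasurableSet.iUnion fun i => (hm₁ _ (hU i)).inter (hm₂ _ (hV i))

/-- The two-sided comparison transfers from products to finite unions of products,
via the atom decomposition. -/
lemma prodAlg_bound (hm₁ : m₁ ≤ m0) (hm₂ : m₂ ≤ m0) (μ : @Measure Ω m0)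
    {A' : Set Ω} (hA' : MeasurableSet[m0] A') {c : ℝ≥0∞}
    (hbase : ∀ U V, MeasurableSet[m₁] U → MeasurableSet[m₂] V →
      μ (A' ∩ (U ∩ V)) ≤ c * μ A' * μ (U ∩ V) ∧ μ A' * μ (U ∩ V) ≤ c * μ (A' ∩ (U ∩ V)))
    {S : Set Ω} (hS : S ∈ ProdAlg m₁ m₂) :
    μ (A' ∩ S) ≤ c * μ A' * μ S ∧ μ A' * μ S ≤ c * μ (A' ∩ S) := by
  classical
  obtain ⟨ι, hι, U, V, hU, hV, rfl⟩ := hS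
  haveI := hι
  set Uat : (ι → Bool) → Set Ω := fun σ => ⋂ i, (if σ i then U i else (U i)ᶜ) with hUatdef
  set Vat : (ι → Bool) → Set Ω := fun σ => ⋃ i, (if σ i then V i else ∅) with hVatdef
  have hUat : ∀ σ, MeasurableSet[m₁] (Uat σ) := fun σ =>
    MeasurableSet.iInter fun i => by by_cases h : σ i <;> simp [h, hU i, (hU i).compl]
  have hVat : ∀ σ, MeasurableSet[m₂] (Vat σ) := fun σ =>
    MeasurableSet.iUnion fun i => by by_cases h : σ i <;> simp [h, hV i]
  have hdisj : Pairwise (Function.onFun Disjoint fun σ => Uat σ ∩ Vat σ) := by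
    intro σ τ hne
    obtain ⟨i, hi⟩ : ∃ i, σ i ≠ τ i := by
      by_contra h; push_neg at h; exact hne (funext h)
    refine Set.disjoint_left.mpr fun x hx hx' => ?_
    have h1 : x ∈ (if σ i then U i else (U i)ᶜ) := Set.mem_iInter.mp hx.1 i
    have h2 : x ∈ (if τ i then U i else (U i)ᶜ) := Set.mem_iInter.mp hx'.1 i
    cases hσ : σ i <;> cases hτ : τ i <;> simp_all
  have hcover : ⋃ i, U i ∩ V i = ⋃ σ, Uat σ ∩ Vat σ := by
    ext x
    simp only [Set.mem_iUnion, Set.mem_inter_iff, Set.mem_iInter, hUatdef, hVatdef]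
    constructor
    · rintro ⟨i, hxU, hxV⟩
      refine ⟨fun j => decide (x ∈ U j), fun j => ?_, ⟨i, ?_⟩⟩
      · by_cases h : x ∈ U j <;> simp [h]
      · simp [hxU, hxV]
    · rintro ⟨σ, hx1, i, hx2⟩
      cases hσ : σ i
      · rw [hσ] at hx2; simp at hx2
      · refine ⟨i, ?_, ?_⟩
        · have := hx1 i; rw [hσ] at this; simpa using this
        · rw [hσ] at hx2; simpa using hx2
  have hmeasσ : ∀ σ, MeasurableSet[m0] (Uat σ ∩ Vat σ) := fun σ =>
    (hm₁ _ (hUat σ)).inter (hm₂ _ (hVat σ))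
  have hμS : μ (⋃ i, U i ∩ V i) = ∑' σ, μ (Uat σ ∩ Vat σ) := by
    rw [hcover, measure_iUnion hdisj hmeasσ]
  have hμAS : μ (A' ∩ ⋃ i, U i ∩ V i) = ∑' σ, μ (A' ∩ (Uat σ ∩ Vat σ)) := by
    rw [hcover, Set.inter_iUnion, measure_iUnion
      (fun σ τ hne => ((hdisj hne).mono Set.inter_subset_right Set.inter_subset_right))
      (fun σ => hA'.inter (hmeasσ σ))]
  constructor
  · rw [hμAS, hμS, ← ENNReal.tsum_mul_left]
    exact ENNReal.tsum_le_tsum fun σ => (hbase _ _ (hUat σ) (hVat σ)).1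
  · rw [hμAS, hμS, ← ENNReal.tsum_mul_left, ← ENNReal.tsum_mul_left]
    exact ENNReal.tsum_le_tsum fun σ => (hbase _ _ (hUat σ) (hVat σ)).2

/-- Approximation of sets in `m₁ ⊔ m₂` by elements of the product algebra. -/
lemma prodAlg_approx (hm₁ : m₁ ≤ m0) (hm₂ : m₂ ≤ m0) (μ : @Measure Ω m0)
    [IsFiniteMeasure μ] :
    ∀ S : Set Ω, MeasurableSet[m₁ ⊔ m₂] S →
    ∀ ε : ℝ≥0∞, ε ≠ 0 → ∃ T ∈ ProdAlg m₁ m₂, μ (S ∆ T) ≤ ε := by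
  have hsup : m₁ ⊔ m₂ ≤ m0 := sup_le hm₁ hm₂
  set P : Set Ω → Prop := fun S => MeasurableSet[m₁ ⊔ m₂] S ∧
    ∀ ε : ℝ≥0∞, ε ≠ 0 → ∃ T ∈ ProdAlg m₁ m₂, μ (S ∆ T) ≤ ε with hPdef
  suffices h : ∀ S, MeasurableSet[m₁ ⊔ m₂] S → P S by
    exact fun S hS => (h S hS).2
  set 𝔊 : MeasurableSpace Ω :=
    { MeasurableSet' := P
      measurableSet_empty := ⟨@MeasurableSet.empty Ω (m₁ ⊔ m₂), fun ε hε => ⟨∅, prodAlg_empty, by simp⟩⟩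
      measurableSet_compl := by
        rintro S ⟨hSm, hS⟩
        refine ⟨hSm.compl, fun ε hε => ?_⟩
        obtain ⟨T, hT, hTa⟩ := hS ε hε
        exact ⟨Tᶜ, prodAlg_compl hT, by rwa [compl_symmDiff_compl]⟩
      measurableSet_iUnion := by
        rintro f hf
        refine ⟨(by exact MeasurableSet.iUnion fun i => (hf i).1 : MeasurableSet[m₁ ⊔ m₂] _), ?_⟩
        intro ε hε
        rcases eq_or_ne ε ⊤ with rfl | hεtop
        · exact ⟨∅, prodAlg_empty, le_top⟩
        have hδ : ∀ i : ℕ, (ε / 4 * 2⁻¹ ^ i : ℝ≥0∞) ≠ 0 := by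
          intro i
          refine mul_ne_zero ?_ (pow_ne_zero _ (by simp))
          simp [ENNReal.div_eq_zero_iff, hε]
        choose T hT hTa using fun i => (hf i).2 _ (hδ i)
        have hsum : ∑' i : ℕ, (ε / 4 * 2⁻¹ ^ i : ℝ≥0∞) = ε / 2 := by
          rw [ENNReal.tsum_mul_left, ENNReal.tsum_geometric]
          rw [ENNReal.one_sub_inv_two, inv_inv]
          have h42 : (4 : ℝ≥0∞)⁻¹ * 2 = 2⁻¹ := by
            rw [show (4 : ℝ≥0∞) = 2 * 2 by norm_num,
              ENNReal.mul_inv (Or.inl two_ne_zero) (Or.inl ENNReal.ofNat_ne_top),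
              mul_assoc, ENNReal.inv_mul_cancel two_ne_zero ENNReal.ofNat_ne_top, mul_one]
          rw [div_eq_mul_inv, div_eq_mul_inv, mul_assoc, h42]
        have hε4 : (ε / 4 : ℝ≥0∞) ≠ 0 := by simp [ENNReal.div_eq_zero_iff, hε]
        -- find M with small tail
        set g : ℕ → Set Ω := fun M => ⋃ i ∈ Finset.range M, f i with hgdef
        have hgm : ∀ M, MeasurableSet[m0] (g M) := fun M =>
          MeasurableSet.biUnion (Finset.range M).countable_toSet fun i _ =>
            hsup _ (hf i).1
        have hgsub : ∀ M, g M ⊆ ⋃ i, f i := fun M =>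
          Set.iUnion₂_subset fun i _ => Set.subset_iUnion f i
        have hgall : (⋃ M, g M) = ⋃ i, f i := by
          refine Set.Subset.antisymm (Set.iUnion_subset fun M => hgsub M) ?_
          refine Set.iUnion_subset fun i => ?_
          refine Set.subset_iUnion_of_subset (i + 1) ?_
          exact Set.subset_biUnion_of_mem (Finset.self_mem_range_succ i)
        have hgmono : Monotone g := fun a b hab =>
          Set.biUnion_subset_biUnion_left (Finset.range_subset_range.mpr hab)
        have hcont : μ (⋃ i, f i) = ⨆ M, μ (g M) := by
          rw [← hgall]
          exact Directed.measure_iUnion (hgmono.directed_le)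
        have hM : ∃ M, μ ((⋃ i, f i) \ g M) ≤ ε / 4 := by
          rcases le_or_gt (μ (⋃ i, f i)) (ε / 4) with hle | hlt
          · exact ⟨0, le_trans (measure_mono Set.diff_subset) hle⟩
          · have h1 : μ (⋃ i, f i) - ε / 4 < ⨆ M, μ (g M) := by
              rw [← hcont]
              exact ENNReal.sub_lt_self (measure_ne_top _ _)
                (lt_of_le_of_lt zero_le hlt).ne' hε4
            obtain ⟨M, hM2⟩ := lt_iSup_iff.mp h1
            refine ⟨M, ?_⟩
            rw [measure_diff (hgsub M) (hgm M).nullMeasurableSet (measure_ne_top _ _)]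
            refine tsub_le_iff_right.mpr ?_
            have h3 := (ENNReal.sub_lt_iff_lt_right
              (by simp [ENNReal.div_eq_top, hεtop] : (ε / 4 : ℝ≥0∞) ≠ ⊤) hlt.le).mp hM2
            exact le_of_lt (by rwa [add_comm] at h3)
        obtain ⟨M, hMle⟩ := hM
        refine ⟨⋃ i ∈ Finset.range M, T i, prodAlg_biUnion_range hT M, ?_⟩
        have hincl : (⋃ i, f i) ∆ (⋃ i ∈ Finset.range M, T i) ⊆
            ((⋃ i, f i) \ g M) ∪ ⋃ i ∈ Finset.range M, (f i ∆ T i) := by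
          intro x hx
          rcases hx with hx | hx
          · -- x ∈ ⋃ f \ ⋃ T
            obtain ⟨hxS, hxT⟩ := hx
            by_cases hxg : x ∈ g M
            · obtain ⟨j, hj, hxj⟩ := Set.mem_iUnion₂.mp hxg
              refine Or.inr (Set.mem_iUnion₂.mpr ⟨j, hj, Or.inl ⟨hxj, ?_⟩⟩)
              exact fun hxTj => hxT (Set.mem_iUnion₂.mpr ⟨j, hj, hxTj⟩)
            · exact Or.inl ⟨hxS, hxg⟩
          · -- x ∈ ⋃ T \ ⋃ f
            obtain ⟨hxT, hxS⟩ := hx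
            obtain ⟨j, hj, hxj⟩ := Set.mem_iUnion₂.mp hxT
            refine Or.inr (Set.mem_iUnion₂.mpr ⟨j, hj, Or.inr ⟨hxj, ?_⟩⟩)
            exact fun hxfj => hxS (Set.mem_iUnion.mpr ⟨j, hxfj⟩)
        calc μ ((⋃ i, f i) ∆ (⋃ i ∈ Finset.range M, T i))
            ≤ μ (((⋃ i, f i) \ g M) ∪ ⋃ i ∈ Finset.range M, (f i ∆ T i)) :=
              measure_mono hincl
          _ ≤ μ ((⋃ i, f i) \ g M) + μ (⋃ i ∈ Finset.range M, (f i ∆ T i)) :=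
              measure_union_le _ _
          _ ≤ ε / 4 + ∑ i ∈ Finset.range M, μ (f i ∆ T i) := by
              exact add_le_add hMle (measure_biUnion_finset_le _ _)
          _ ≤ ε / 4 + ∑ i ∈ Finset.range M, (ε / 4 * 2⁻¹ ^ i : ℝ≥0∞) := by
              exact add_le_add_right (Finset.sum_le_sum fun i _ => hTa i) _
          _ ≤ ε / 4 + ε / 2 := by
              refine add_le_add_right ?_ _
              rw [← hsum]
              exact ENNReal.sum_le_tsum _
          _ ≤ ε := by
              calc (ε / 4 + ε / 2 : ℝ≥0∞) ≤ ε / 2 + ε / 2 := by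
                    refine add_le_add_left ?_ _
                    exact ENNReal.div_le_div_left (by norm_num : (2:ℝ≥0∞) ≤ 4) ε
                _ = ε := ENNReal.add_halves ε }
  have hle : m₁ ⊔ m₂ ≤ 𝔊 := by
    refine sup_le ?_ ?_
    · intro S hS
      refine ⟨(le_sup_left : m₁ ≤ m₁ ⊔ m₂) _ hS, fun ε hε => ?_⟩
      exact ⟨S ∩ Set.univ, prodAlg_of_prod hS (@MeasurableSet.univ Ω m₂), by simp⟩
    · intro S hS
      refine ⟨(le_sup_right : m₂ ≤ m₁ ⊔ m₂) _ hS, fun ε hε => ?_⟩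
      exact ⟨Set.univ ∩ S, prodAlg_of_prod (@MeasurableSet.univ Ω m₁) hS, by simp⟩
  exact fun S hS => hle S hS

/-- Two-sided comparison extends from products to the generated σ-algebra. -/
lemma product_extension (hm₁ : m₁ ≤ m0) (hm₂ : m₂ ≤ m0) (μ : @Measure Ω m0)
    [IsProbabilityMeasure μ] {A' : Set Ω} (hA' : MeasurableSet[m0] A') {c : ℝ≥0∞}
    (hc : c ≠ ⊤)
    (hbase : ∀ U V, MeasurableSet[m₁] U → MeasurableSet[m₂] V →
      μ (A' ∩ (U ∩ V)) ≤ c * μ A' * μ (U ∩ V) ∧ μ A' * μ (U ∩ V) ≤ c * μ (A' ∩ (U ∩ V)))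
    {S : Set Ω} (hS : MeasurableSet[m₁ ⊔ m₂] S) :
    μ (A' ∩ S) ≤ c * μ A' * μ S ∧ μ A' * μ S ≤ c * μ (A' ∩ S) := by
  have key : ∀ ε : ℝ≥0, 0 < ε →
      μ (A' ∩ S) ≤ c * μ A' * μ S + ε ∧ μ A' * μ S ≤ c * μ (A' ∩ S) + ε := by
    intro ε hε
    set δ : ℝ≥0∞ := (ε : ℝ≥0∞) / (c + 1) with hδdef
    have hδ0 : δ ≠ 0 := by
      rw [hδdef]
      intro h
      rcases ENNReal.div_eq_zero_iff.mp h with h | h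
      · exact hε.ne' (ENNReal.coe_eq_zero.mp h)
      · exact hc (by simpa [ENNReal.add_eq_top] using h)
    obtain ⟨T, hTA, hTa⟩ := prodAlg_approx hm₁ hm₂ μ S hS δ hδ0
    have hbT := prodAlg_bound hm₁ hm₂ μ hA' hbase hTA
    have hTm : MeasurableSet[m0] T := prodAlg_measurableSet hm₁ hm₂ hTA
    have hsub1 : A' ∩ S ⊆ (A' ∩ T) ∪ (S ∆ T) := by
      intro x hx
      by_cases hxT : x ∈ T
      · exact Or.inl ⟨hx.1, hxT⟩
      · exact Or.inr (Or.inl ⟨hx.2, hxT⟩)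
    have hsub2 : A' ∩ T ⊆ (A' ∩ S) ∪ (S ∆ T) := by
      intro x hx
      by_cases hxS : x ∈ S
      · exact Or.inl ⟨hx.1, hxS⟩
      · exact Or.inr (Or.inr ⟨hx.2, hxS⟩)
    have hsub3 : T ⊆ S ∪ (S ∆ T) := by
      intro x hx
      by_cases hxS : x ∈ S
      · exact Or.inl hxS
      · exact Or.inr (Or.inr ⟨hx, hxS⟩)
    have hsub4 : S ⊆ T ∪ (S ∆ T) := by
      intro x hx
      by_cases hxT : x ∈ T
      · exact Or.inl hxT
      · exact Or.inr (Or.inl ⟨hx, hxT⟩)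
    have hcδ : (c + 1) * δ ≤ (ε : ℝ≥0∞) := ENNReal.mul_div_le
    have hμA1 : μ A' ≤ 1 := prob_le_one
    constructor
    · calc μ (A' ∩ S) ≤ μ (A' ∩ T) + μ (S ∆ T) :=
            le_trans (measure_mono hsub1) (measure_union_le _ _)
        _ ≤ c * μ A' * μ T + δ := add_le_add hbT.1 hTa
        _ ≤ c * μ A' * (μ S + δ) + δ := by
            refine add_le_add_left (mul_le_mul_right ?_ _) δ
            calc μ T ≤ μ S + μ (S ∆ T) :=
                  le_trans (measure_mono hsub3) (measure_union_le _ _)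
              _ ≤ μ S + δ := add_le_add_right hTa _
        _ = c * μ A' * μ S + c * μ A' * δ + δ := by ring
        _ ≤ c * μ A' * μ S + c * δ + δ := by
            refine add_le_add_left (add_le_add_right ?_ _) δ
            exact mul_le_mul' (mul_le_of_le_one_right' hμA1) le_rfl
        _ = c * μ A' * μ S + (c + 1) * δ := by ring
        _ ≤ c * μ A' * μ S + (ε : ℝ≥0∞) := add_le_add_right hcδ _
    · calc μ A' * μ S ≤ μ A' * (μ T + δ) := by
            refine mul_le_mul_right ?_ _
            calc μ S ≤ μ T + μ (S ∆ T) :=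
                  le_trans (measure_mono hsub4) (measure_union_le _ _)
              _ ≤ μ T + δ := add_le_add_right hTa _
        _ = μ A' * μ T + μ A' * δ := by ring
        _ ≤ c * μ (A' ∩ T) + δ :=
            add_le_add hbT.2 (mul_le_of_le_one_left' hμA1)
        _ ≤ c * (μ (A' ∩ S) + δ) + δ := by
            refine add_le_add_left (mul_le_mul_right ?_ _) δ
            calc μ (A' ∩ T) ≤ μ (A' ∩ S) + μ (S ∆ T) :=
                  le_trans (measure_mono hsub2) (measure_union_le _ _)
              _ ≤ μ (A' ∩ S) + δ := add_le_add_right hTa _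
        _ = c * μ (A' ∩ S) + (c + 1) * δ := by ring
        _ ≤ c * μ (A' ∩ S) + (ε : ℝ≥0∞) := add_le_add_right hcδ _
  constructor
  · refine ENNReal.le_of_forall_pos_le_add fun ε hε _ => (key ε hε).1
  · refine ENNReal.le_of_forall_pos_le_add fun ε hε _ => (key ε hε).2

end Extension

section Chain

variable {μ : Measure Ω} {X : ℕ → Ω → E} {κ : ℕ → Kernel E E} {C : ℝ}

/-- One-step Markov property in set-lintegral form. -/
lemma setLIntegral_kernel_eq
    (hprob : IsProbabilityMeasure μ) (hX : ∀ n, Measurable (X n))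
    (hκ : ∀ n, IsMarkovKernel (κ n))
    (hM : ∀ n (A : Set E), MeasurableSet A →
      (μ[fun ω => A.indicator (fun _ => (1 : ℝ)) (X (n + 1) ω) |
          ⨆ i : Fin (n + 1), MeasurableSpace.comap (X i) (inferInstance : MeasurableSpace E)]
        =ᵐ[μ] fun ω => (κ n (X n ω) A).toReal))
    {m : ℕ} {B : Set E} (hB : MeasurableSet B) {U : Set Ω} (hU : MeasurableSet[Ft X m] U) :
    μ (U ∩ X (m+1) ⁻¹' B) = ∫⁻ ω in U, κ m (X m ω) B ∂μ := by
  haveI := hprob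
  haveI := hκ m
  have hm : Ft X m ≤ ‹MeasurableSpace Ω› := Ft_le_ambient hX m
  have hUm : MeasurableSet U := hm _ hU
  haveI : SigmaFinite (μ.trim hm) := by
    haveI : IsFiniteMeasure (μ.trim hm) := isFiniteMeasure_trim hm
    infer_instance
  have hfun : (fun ω => B.indicator (fun _ => (1 : ℝ)) (X (m+1) ω))
      = (X (m+1) ⁻¹' B).indicator (fun _ => (1 : ℝ)) := by
    ext ω
    exact (Set.indicator_comp_right (X (m+1)) (s := B) (g := fun _ => (1:ℝ))).symm
  have hind : Integrable (fun ω => B.indicator (fun _ => (1 : ℝ)) (X (m+1) ω)) μ := by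
    rw [hfun]
    exact (integrable_const (1:ℝ)).indicator ((hX (m+1)) hB)
  have h1 : ∫ ω in U, B.indicator (fun _ => (1 : ℝ)) (X (m+1) ω) ∂μ
      = ∫ ω in U, (κ m (X m ω) B).toReal ∂μ := by
    rw [← setIntegral_condExp hm hind hU]
    exact setIntegral_congr_ae hUm ((hM m B hB).mono fun ω h _ => h)
  have hLHS : ∫ ω in U, B.indicator (fun _ => (1 : ℝ)) (X (m+1) ω) ∂μ
      = (μ (U ∩ X (m+1) ⁻¹' B)).toReal := by
    simp only [hfun]
    have : ∫ ω in U, (X (m+1) ⁻¹' B).indicator (fun _ => (1:ℝ)) ω ∂μ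
        = ((μ.restrict U) (X (m+1) ⁻¹' B)).toReal := by
      rw [show ((fun _ => (1:ℝ)) : Ω → ℝ) = (1 : Ω → ℝ) from rfl]
      exact integral_indicator_one ((hX (m+1)) hB)
    rw [this, Measure.restrict_apply ((hX (m+1)) hB), Set.inter_comm]
  have hmeasκ : Measurable (fun ω => κ m (X m ω) B) :=
    ((κ m).measurable_coe hB).comp (hX m)
  have hRHS : ∫ ω in U, (κ m (X m ω) B).toReal ∂μ
      = (∫⁻ ω in U, κ m (X m ω) B ∂μ).toReal := by
    refine integral_toReal hmeasκ.aemeasurable ?_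
    exact Filter.Eventually.of_forall fun ω => measure_lt_top _ _
  have hfin : ∫⁻ ω in U, κ m (X m ω) B ∂μ ≠ ⊤ := by
    have : ∫⁻ ω in U, κ m (X m ω) B ∂μ ≤ ∫⁻ _ in U, 1 ∂μ :=
      lintegral_mono fun ω => prob_le_one
    refine ne_top_of_le_ne_top ?_ this
    simp [measure_ne_top]
  have := hLHS.symm.trans (h1.trans hRHS)
  exact (ENNReal.toReal_eq_toReal_iff' (measure_ne_top _ _) hfin).mp this

/-- One-step Markov property for lintegrals of functions of the next state. -/
lemma setLIntegral_comp_succ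
    (hprob : IsProbabilityMeasure μ) (hX : ∀ n, Measurable (X n))
    (hκ : ∀ n, IsMarkovKernel (κ n))
    (hM : ∀ n (A : Set E), MeasurableSet A →
      (μ[fun ω => A.indicator (fun _ => (1 : ℝ)) (X (n + 1) ω) |
          ⨆ i : Fin (n + 1), MeasurableSpace.comap (X i) (inferInstance : MeasurableSpace E)]
        =ᵐ[μ] fun ω => (κ n (X n ω) A).toReal))
    {m : ℕ} {φ : E → ℝ≥0∞} (hφ : Measurable φ) {U : Set Ω} (hU : MeasurableSet[Ft X m] U) :
    ∫⁻ ω in U, φ (X (m+1) ω) ∂μ = ∫⁻ ω in U, ∫⁻ y, φ y ∂(κ m (X m ω)) ∂μ := by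
  have hmeas : Measurable (fun ω => κ m (X m ω)) := (Kernel.measurable (κ m)).comp (hX m)
  have hEq : Measure.map (X (m+1)) (μ.restrict U) = (μ.restrict U).bind (fun ω => κ m (X m ω)) := by
    ext B hB
    rw [Measure.map_apply (hX _) hB, Measure.restrict_apply ((hX (m+1)) hB),
      Measure.bind_apply hB hmeas.aemeasurable, Set.inter_comm]
    rw [setLIntegral_kernel_eq hprob hX hκ hM hB hU]
  calc ∫⁻ ω in U, φ (X (m+1) ω) ∂μ
      = ∫⁻ y, φ y ∂(Measure.map (X (m+1)) (μ.restrict U)) := (lintegral_map hφ (hX _)).symm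
    _ = ∫⁻ ω, ∫⁻ y, φ y ∂(κ m (X m ω)) ∂(μ.restrict U) := by
        rw [hEq]; exact Measure.lintegral_bind hmeas.aemeasurable hφ.aemeasurable

/-- Ellipticity for lintegrals. -/
lemma ell_lintegral
    (hX : ∀ n, Measurable (X n))
    (hEll : ∀ n (A : Set E), MeasurableSet A → ∀ᵐ ω ∂μ,
      κ n (X n ω) A ≤ ENNReal.ofReal C * Measure.map (X (n + 1)) μ A ∧
      Measure.map (X (n + 1)) μ A ≤ ENNReal.ofReal C * κ n (X n ω) A)
    {m : ℕ} {φ : E → ℝ≥0∞} (hφ : Measurable φ) :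
    ∀ᵐ ω ∂μ, ∫⁻ y, φ y ∂(κ m (X m ω)) ≤ ENNReal.ofReal C * ∫⁻ y, φ y ∂(Measure.map (X (m+1)) μ)
      ∧ ∫⁻ y, φ y ∂(Measure.map (X (m+1)) μ) ≤ ENNReal.ofReal C * ∫⁻ y, φ y ∂(κ m (X m ω)) := by
  set c := ENNReal.ofReal C with hc
  have hae : ∀ᵐ ω ∂μ, ∀ k : ℕ, ∀ x ∈ (((SimpleFunc.eapprox φ k).range : Finset ℝ≥0∞) : Set ℝ≥0∞),
      κ m (X m ω) ((SimpleFunc.eapprox φ k) ⁻¹' {x}) ≤ c * Measure.map (X (m+1)) μ ((SimpleFunc.eapprox φ k) ⁻¹' {x})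
      ∧ Measure.map (X (m+1)) μ ((SimpleFunc.eapprox φ k) ⁻¹' {x}) ≤ c * κ m (X m ω) ((SimpleFunc.eapprox φ k) ⁻¹' {x}) := by
    rw [ae_all_iff]
    intro k
    rw [ae_ball_iff (Finset.countable_toSet _)]
    intro x _
    exact hEll m _ (SimpleFunc.measurableSet_preimage _ _)
  filter_upwards [hae] with ω hω
  have hsup : ∀ (ν : Measure E), ∫⁻ y, φ y ∂ν = ⨆ k, (SimpleFunc.eapprox φ k).lintegral ν := by
    intro ν
    rw [show ∫⁻ y, φ y ∂ν = ∫⁻ y, ⨆ k, SimpleFunc.eapprox φ k y ∂ν from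
      lintegral_congr fun y => (SimpleFunc.iSup_eapprox_apply hφ y).symm]
    rw [lintegral_iSup (fun k => (SimpleFunc.eapprox φ k).measurable)
      (fun i j h a => SimpleFunc.monotone_eapprox φ h a)]
    exact iSup_congr fun k => SimpleFunc.lintegral_eq_lintegral _ _
  have key : ∀ k : ℕ,
      (SimpleFunc.eapprox φ k).lintegral (κ m (X m ω)) ≤ c * (SimpleFunc.eapprox φ k).lintegral (Measure.map (X (m+1)) μ)
      ∧ (SimpleFunc.eapprox φ k).lintegral (Measure.map (X (m+1)) μ) ≤ c * (SimpleFunc.eapprox φ k).lintegral (κ m (X m ω)) := by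
    intro k
    unfold SimpleFunc.lintegral
    rw [Finset.mul_sum, Finset.mul_sum]
    constructor
    · refine Finset.sum_le_sum fun x hx => ?_
      rw [mul_left_comm]
      exact mul_le_mul_right (hω k x (Finset.mem_coe.mpr hx)).1 x
    · refine Finset.sum_le_sum fun x hx => ?_
      rw [mul_left_comm]
      exact mul_le_mul_right (hω k x (Finset.mem_coe.mpr hx)).2 x
  constructor
  · rw [hsup]
    refine iSup_le fun k => (key k).1.trans (mul_le_mul_right ?_ c)
    rw [hsup]
    exact le_iSup (fun k => (SimpleFunc.eapprox φ k).lintegral (Measure.map (X (m+1)) μ)) k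
  · rw [hsup (Measure.map (X (m+1)) μ)]
    refine iSup_le fun k => (key k).2.trans (mul_le_mul_right ?_ c)
    rw [hsup]
    exact le_iSup (fun k => (SimpleFunc.eapprox φ k).lintegral (κ m (X m ω))) k


variable (μ X) in
/-- `V` admits a conditional-probability representative, a function of `X_t`, tested
against all `Ft X t`-sets. -/
def Repr (t : ℕ) (V : Set Ω) : Prop :=
  ∃ φ : E → ℝ≥0∞, Measurable φ ∧ ∀ U : Set Ω, MeasurableSet[Ft X t] U →
    μ (U ∩ V) = ∫⁻ ω in U, φ (X t ω) ∂μ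


section
variable (hprob : IsProbabilityMeasure μ) (hX : ∀ n, Measurable (X n))
    (hκ : ∀ n, IsMarkovKernel (κ n))
    (hM : ∀ n (A : Set E), MeasurableSet A →
      (μ[fun ω => A.indicator (fun _ => (1 : ℝ)) (X (n + 1) ω) |
          ⨆ i : Fin (n + 1), MeasurableSpace.comap (X i) (inferInstance : MeasurableSpace E)]
        =ᵐ[μ] fun ω => (κ n (X n ω) A).toReal))

include hprob hX hκ hM

lemma Repr.bridge {t : ℕ} {V : Set Ω} (h : Repr μ X (t + 1) V) : Repr μ X t V := by
  obtain ⟨φ, hφ, hP⟩ := h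
  refine ⟨fun x => ∫⁻ y, φ y ∂(κ t x),
    Measurable.lintegral_kernel_prod_right' (κ := κ t) (hφ.comp measurable_snd), ?_⟩
  intro U hU
  rw [hP U (Ft_mono (Nat.le_succ t) _ hU)]
  exact setLIntegral_comp_succ hprob hX hκ hM hφ hU

lemma Repr.bridge_many {V : Set Ω} : ∀ (d t : ℕ), Repr μ X (t + d) V → Repr μ X t V := by
  intro d
  induction d with
  | zero => exact fun t h => h
  | succ d ih =>
      intro t h
      have : Repr μ X ((t + 1) + d) V := by rwa [show (t+1)+d = t+(d+1) by omega]
      exact (ih (t+1) this).bridge hprob hX hκ hM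

lemma repr_rect : ∀ (k : ℕ) (T : Finset ℕ), T.card = k → ∀ (B : ℕ → Set E),
    (∀ j, MeasurableSet (B j)) → ∀ t : ℕ, (∀ s ∈ T, t ≤ s) →
    Repr μ X t (⋂ s ∈ T, X s ⁻¹' B s) := by
  intro k
  induction k using Nat.strong_induction_on with
  | _ k ih =>
    intro T hk B hB t ht
    rcases T.eq_empty_or_nonempty with rfl | hne
    · refine ⟨fun _ => 1, measurable_const, ?_⟩
      intro U hU
      simp
    · set m := T.min' hne with hm
      have hm_mem : m ∈ T := T.min'_mem hne
      have htm : t ≤ m := ht m hm_mem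
      -- Repr at time m for the rectangle without coordinate m
      have hrest : Repr μ X m (⋂ s ∈ T.erase m, X s ⁻¹' B s) := by
        refine ih (T.erase m).card ?_ _ rfl B hB m ?_
        · rw [← hk]; exact Finset.card_erase_lt_of_mem hm_mem
        · exact fun s hs => T.min'_le s (Finset.mem_of_mem_erase hs)
      obtain ⟨φ, hφ, hP⟩ := hrest
      have habs : Repr μ X m (⋂ s ∈ T, X s ⁻¹' B s) := by
        refine ⟨(B m).indicator φ, hφ.indicator (hB m), ?_⟩
        intro U hU
        have hsplit : (⋂ s ∈ T, X s ⁻¹' B s)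
            = (X m ⁻¹' B m) ∩ ⋂ s ∈ T.erase m, X s ⁻¹' B s := by
          conv_lhs => rw [← Finset.insert_erase hm_mem]
          exact Finset.set_biInter_insert m (T.erase m) (fun s => X s ⁻¹' B s)
        have hU' : MeasurableSet[Ft X m] (U ∩ X m ⁻¹' B m) :=
          hU.inter (measurableSet_preimage_Ft le_rfl (hB m))
        rw [hsplit, ← Set.inter_assoc, hP _ hU']
        have hBm : MeasurableSet (X m ⁻¹' B m) := (hX m) (hB m)
        have h1 := lintegral_indicator (μ := μ.restrict U) hBm (fun ω => φ (X m ω))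
        rw [Measure.restrict_restrict hBm] at h1
        rw [Set.inter_comm U (X m ⁻¹' B m)] at *
        rw [← h1]
        refine lintegral_congr fun ω => ?_
        exact Set.indicator_comp_right (X m) (s := B m) (g := φ)
      have : m = t + (m - t) := by omega
      rw [this] at habs
      exact Repr.bridge_many hprob hX hκ hM (m - t) t habs

/-- Every set in the σ-algebra generated by finitely many future coordinates admits a
representation at time `n+1`. -/
lemma repr_future {n : ℕ} (Tf : Finset ℕ) (hTf : ∀ j ∈ Tf, n < j) :
    ∀ V : Set Ω,
      MeasurableSet[⨆ j ∈ Tf, MeasurableSpace.comap (X j) inferInstance] V →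
      Repr μ X (n + 1) V := by
  have h𝓣 : (⨆ j ∈ Tf, MeasurableSpace.comap (X j) inferInstance : MeasurableSpace Ω)
      ≤ ‹MeasurableSpace Ω› := iSup₂_le fun j _ => (hX j).comap_le
  set rectFam : Set (Set Ω) :=
    {S | ∃ B : ℕ → Set E, (∀ j, MeasurableSet (B j)) ∧ S = ⋂ j ∈ Tf, X j ⁻¹' B j} with hrectdef
  have h_eq : (⨆ j ∈ Tf, MeasurableSpace.comap (X j) inferInstance : MeasurableSpace Ω)
      = MeasurableSpace.generateFrom rectFam := by
    refine le_antisymm ?_ ?_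
    · refine iSup₂_le fun j hj => ?_
      intro S hS
      obtain ⟨B₀, hB₀, rfl⟩ := hS
      refine MeasurableSpace.measurableSet_generateFrom ?_
      refine ⟨fun i => if i = j then B₀ else Set.univ, fun i => ?_, ?_⟩
      · by_cases hij : i = j <;> simp [hij, hB₀]
      · ext x
        simp only [Set.mem_iInter, Set.mem_preimage]
        constructor
        · intro h
          intro i hi
          by_cases hij : i = j
          · subst hij; simpa using h
          · simp [hij]
        · intro h
          have := h j hj
          simpa using this
    · refine MeasurableSpace.generateFrom_le fun S hS => ?_
      obtain ⟨B, hB, rfl⟩ := hS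
      refine MeasurableSet.biInter Tf.countable_toSet fun j hj => ?_
      exact (le_iSup₂ (f := fun j _ => MeasurableSpace.comap (X j)
        (inferInstance : MeasurableSpace E)) j hj) _ ⟨B j, hB j, rfl⟩
  have h_pi : IsPiSystem rectFam := by
    rintro S ⟨B, hB, rfl⟩ S' ⟨B', hB', rfl⟩ -
    refine ⟨fun j => B j ∩ B' j, fun j => (hB j).inter (hB' j), ?_⟩
    ext x
    simp only [Set.mem_inter_iff, Set.mem_iInter, Set.mem_preimage]
    exact ⟨fun h i hi => ⟨h.1 i hi, h.2 i hi⟩,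
      fun h => ⟨fun i hi => (h i hi).1, fun i hi => (h i hi).2⟩⟩
  intro V hV
  refine MeasurableSpace.induction_on_inter
    (m := (⨆ j ∈ Tf, MeasurableSpace.comap (X j) inferInstance : MeasurableSpace Ω))
    (C := fun V _ => Repr μ X (n+1) V) h_eq h_pi ?_ ?_ ?_ ?_ V hV
  · exact ⟨0, measurable_const, fun U hU => by simp⟩
  · rintro S ⟨B, hB, rfl⟩
    exact repr_rect hprob hX hκ hM Tf.card Tf rfl B hB (n+1) fun s hs => hTf s hs
  · -- complement
    rintro V hVm ⟨φ, hφ, hP⟩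
    set L : Measure E := Measure.map (X (n+1)) μ with hLdef
    haveI := hprob
    haveI : IsProbabilityMeasure L := Measure.isProbabilityMeasure_map (hX (n+1)).aemeasurable
    have hVamb : MeasurableSet V := h𝓣 _ hVm
    have hDk : ∀ k : ℕ, L {y | 1 + ((k : ℝ≥0∞) + 1)⁻¹ ≤ φ y} = 0 := by
      intro k
      set D : Set E := {y | 1 + ((k : ℝ≥0∞) + 1)⁻¹ ≤ φ y} with hDdef
      have hD : MeasurableSet D := measurableSet_le measurable_const hφ
      have hU : MeasurableSet[Ft X (n+1)] (X (n+1) ⁻¹' D) :=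
        measurableSet_preimage_Ft le_rfl hD
      have h1 : μ (X (n+1) ⁻¹' D ∩ V) = ∫⁻ y in D, φ y ∂L := by
        rw [hP _ hU, hLdef, setLIntegral_map hD hφ (hX (n+1))]
      have h2 : (1 + ((k : ℝ≥0∞) + 1)⁻¹) * L D ≤ ∫⁻ y in D, φ y ∂L := by
        rw [← setLIntegral_const D (1 + ((k : ℝ≥0∞) + 1)⁻¹)]
        exact setLIntegral_mono hφ fun y hy => hy
      have h3 : (1 + ((k : ℝ≥0∞) + 1)⁻¹) * L D ≤ L D := by
        refine (h2.trans ?_)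
        rw [← h1]
        calc μ (X (n+1) ⁻¹' D ∩ V) ≤ μ (X (n+1) ⁻¹' D) := measure_mono Set.inter_subset_left
          _ = L D := by rw [hLdef, Measure.map_apply (hX (n+1)) hD]
      by_contra hne
      have hfin : L D ≠ ⊤ := measure_ne_top _ _
      have hlt : (1 : ℝ≥0∞) * L D < (1 + ((k : ℝ≥0∞) + 1)⁻¹) * L D := by
        refine ENNReal.mul_lt_mul_left hne hfin ?_
        exact ENNReal.lt_add_right ENNReal.one_ne_top (by simp)
      rw [one_mul] at hlt
      exact absurd h3 (not_le.mpr hlt)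
    have hD0 : L {y | 1 < φ y} = 0 := by
      have hsub : {y | 1 < φ y} ⊆ ⋃ k : ℕ, {y | 1 + ((k : ℝ≥0∞) + 1)⁻¹ ≤ φ y} := by
        intro y hy
        simp only [Set.mem_setOf_eq, Set.mem_iUnion] at hy ⊢
        rcases eq_or_ne (φ y) ⊤ with htop | htop
        · exact ⟨0, by rw [htop]; exact le_top⟩
        · have hpos : φ y - 1 ≠ 0 := by
            simpa [tsub_eq_zero_iff_le] using hy.not_ge
          obtain ⟨n', hn'⟩ := ENNReal.exists_inv_nat_lt hpos
          refine ⟨n', ?_⟩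
          have h4 : ((n' : ℝ≥0∞) + 1)⁻¹ ≤ ((n' : ℝ≥0∞))⁻¹ :=
            ENNReal.inv_le_inv.mpr (le_self_add)
          have h5 : ((n' : ℝ≥0∞) + 1)⁻¹ ≤ φ y - 1 := h4.trans hn'.le
          calc 1 + ((n' : ℝ≥0∞) + 1)⁻¹ ≤ 1 + (φ y - 1) := add_le_add_right h5 1
            _ = φ y := add_tsub_cancel_of_le hy.le
      exact measure_mono_null hsub (by
        refine measure_iUnion_null fun k => hDk k)
    set g : E → ℝ≥0∞ := fun y => min (φ y) 1 with hgdef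
    have hg : Measurable g := hφ.min measurable_const
    have hcongr : (fun ω => φ (X (n+1) ω)) =ᵐ[μ] fun ω => g (X (n+1) ω) := by
      have hnull : μ (X (n+1) ⁻¹' {y | 1 < φ y}) = 0 := by
        rw [← Measure.map_apply (hX (n+1)) (measurableSet_lt measurable_const hφ)]
        exact hD0
      refine (measure_mono_null ?_ hnull : μ {ω | ¬ _} = 0)
      intro ω hω
      simp only [Set.mem_setOf_eq] at hω ⊢
      simp only [Set.mem_preimage, Set.mem_setOf_eq]
      by_contra hle
      push_neg at hle
      exact hω (by simp [hgdef, min_eq_left hle])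
    refine ⟨fun y => 1 - g y, measurable_const.sub hg, ?_⟩
    intro U hU
    have hUamb : MeasurableSet U := Ft_le_ambient hX (n+1) _ hU
    have h4 : μ (U ∩ Vᶜ) = μ U - μ (U ∩ V) := by
      rw [show U ∩ Vᶜ = U \ (U ∩ V) by rw [Set.diff_self_inter]; exact Set.diff_eq U V]
      exact measure_diff Set.inter_subset_left (hUamb.inter hVamb).nullMeasurableSet
        (measure_ne_top _ _)
    have h5 : μ (U ∩ V) = ∫⁻ ω in U, g (X (n+1) ω) ∂μ := by
      rw [hP U hU]
      exact lintegral_congr_ae (ae_restrict_of_ae hcongr)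
    have h6 : ∫⁻ ω in U, (1 - g (X (n+1) ω)) ∂μ
        = μ U - ∫⁻ ω in U, g (X (n+1) ω) ∂μ := by
      have := lintegral_sub (μ := μ.restrict U) (f := fun _ => (1:ℝ≥0∞))
        (g := fun ω => g (X (n+1) ω)) (hg.comp (hX (n+1)))
        (by
          refine ne_top_of_le_ne_top (by simp [measure_ne_top] : μ U ≠ ⊤) ?_
          rw [← setLIntegral_one U]
          exact lintegral_mono fun ω => min_le_right _ _)
        (Filter.Eventually.of_forall fun ω => min_le_right _ _)
      rw [this, setLIntegral_one]
    rw [h4, h5, ← h6]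
  · -- disjoint unions
    intro f hdisj hfm hC
    choose φs hφs hPs using hC
    refine ⟨fun y => ∑' i, φs i y, Measurable.ennreal_tsum hφs, ?_⟩
    intro U hU
    have hUamb : MeasurableSet U := Ft_le_ambient hX (n+1) _ hU
    rw [Set.inter_iUnion]
    rw [measure_iUnion (fun i j hij => (hdisj hij).mono Set.inter_subset_right
        Set.inter_subset_right) (fun i => hUamb.inter (h𝓣 _ (hfm i)))]
    calc ∑' i, μ (U ∩ f i) = ∑' i, ∫⁻ ω in U, φs i (X (n+1) ω) ∂μ := by
          exact tsum_congr fun i => hPs i U hU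
      _ = ∫⁻ ω in U, ∑' i, φs i (X (n+1) ω) ∂μ :=
          (lintegral_tsum fun i => ((hφs i).comp (hX (n+1))).aemeasurable).symm


end

section
variable (hprob : IsProbabilityMeasure μ) (hX : ∀ n, Measurable (X n))
    (hκ : ∀ n, IsMarkovKernel (κ n))
    (hM : ∀ n (A : Set E), MeasurableSet A →
      (μ[fun ω => A.indicator (fun _ => (1 : ℝ)) (X (n + 1) ω) |
          ⨆ i : Fin (n + 1), MeasurableSpace.comap (X i) (inferInstance : MeasurableSpace E)]
        =ᵐ[μ] fun ω => (κ n (X n ω) A).toReal))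
    (hEll : ∀ n (A : Set E), MeasurableSet A → ∀ᵐ ω ∂μ,
      κ n (X n ω) A ≤ ENNReal.ofReal C * Measure.map (X (n + 1)) μ A ∧
      Measure.map (X (n + 1)) μ A ≤ ENNReal.ofReal C * κ n (X n ω) A)

include hprob hX hκ hM hEll

/-- Comparison against any future σ-algebra event. -/
lemma fut_bound {n : ℕ} (Tf : Finset ℕ) (hTf : ∀ j ∈ Tf, n < j)
    {V : Set Ω} (hV : MeasurableSet[⨆ j ∈ Tf, MeasurableSpace.comap (X j) inferInstance] V)
    {U : Set Ω} (hU : MeasurableSet[Ft X n] U) :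
    μ (U ∩ V) ≤ ENNReal.ofReal C * (μ U * μ V) ∧
      μ U * μ V ≤ ENNReal.ofReal C * μ (U ∩ V) := by
  obtain ⟨φ, hφ, hP⟩ := repr_future hprob hX hκ hM Tf hTf V hV
  have hμV : ∫⁻ y, φ y ∂(Measure.map (X (n+1)) μ) = μ V := by
    have h0 := hP Set.univ MeasurableSet.univ
    rw [Set.univ_inter, Measure.restrict_univ] at h0
    rw [lintegral_map hφ (hX (n+1))]
    exact h0.symm
  have hrepr : μ (U ∩ V) = ∫⁻ ω in U, ∫⁻ y, φ y ∂(κ n (X n ω)) ∂μ := by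
    rw [hP U (Ft_mono (Nat.le_succ n) _ hU)]
    exact setLIntegral_comp_succ hprob hX hκ hM hφ hU
  have hell := ell_lintegral (C := C) hX hEll (m := n) hφ
  have hUamb : MeasurableSet U := Ft_le_ambient hX n _ hU
  have hinner : Measurable fun ω => ∫⁻ y, φ y ∂(κ n (X n ω)) :=
    (Measurable.lintegral_kernel_prod_right' (κ := κ n) (hφ.comp measurable_snd)).comp (hX n)
  constructor
  · rw [hrepr]
    calc ∫⁻ ω in U, ∫⁻ y, φ y ∂(κ n (X n ω)) ∂μ
        ≤ ∫⁻ _ in U, ENNReal.ofReal C * μ V ∂μ := by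
          refine lintegral_mono_ae (ae_restrict_of_ae (hell.mono fun ω h => ?_))
          exact h.1.trans_eq (by rw [hμV])
      _ = ENNReal.ofReal C * μ V * μ U := by
          rw [setLIntegral_const]
      _ = ENNReal.ofReal C * (μ U * μ V) := by ring
  · calc μ U * μ V = μ V * μ U := by ring
      _ = ∫⁻ _ in U, μ V ∂μ := by rw [setLIntegral_const]
      _ = ∫⁻ _ in U, ∫⁻ y, φ y ∂(Measure.map (X (n+1)) μ) ∂μ := by rw [hμV]
      _ ≤ ∫⁻ ω in U, ENNReal.ofReal C * ∫⁻ y, φ y ∂(κ n (X n ω)) ∂μ :=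
          lintegral_mono_ae (ae_restrict_of_ae (hell.mono fun ω h => h.2))
      _ = ENNReal.ofReal C * ∫⁻ ω in U, ∫⁻ y, φ y ∂(κ n (X n ω)) ∂μ :=
          lintegral_const_mul _ hinner
      _ = ENNReal.ofReal C * μ (U ∩ V) := by rw [hrepr]

/-- Comparison for a single next-step event against the past. -/
lemma past_bound {m : ℕ} {A : Set E} (hA : MeasurableSet A) {U : Set Ω}
    (hU : MeasurableSet[Ft X m] U) :
    μ (X (m+1) ⁻¹' A ∩ U) ≤ ENNReal.ofReal C * (μ (X (m+1) ⁻¹' A) * μ U) ∧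
      μ (X (m+1) ⁻¹' A) * μ U ≤ ENNReal.ofReal C * μ (X (m+1) ⁻¹' A ∩ U) := by
  have hkey : μ (U ∩ X (m+1) ⁻¹' A) = ∫⁻ ω in U, κ m (X m ω) A ∂μ :=
    setLIntegral_kernel_eq hprob hX hκ hM hA hU
  have hmap : Measure.map (X (m+1)) μ A = μ (X (m+1) ⁻¹' A) :=
    Measure.map_apply (hX (m+1)) hA
  have hell := hEll m A hA
  have hmeasκ : Measurable fun ω => κ m (X m ω) A := ((κ m).measurable_coe hA).comp (hX m)
  constructor
  · rw [Set.inter_comm, hkey]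
    calc ∫⁻ ω in U, κ m (X m ω) A ∂μ
        ≤ ∫⁻ _ in U, ENNReal.ofReal C * μ (X (m+1) ⁻¹' A) ∂μ := by
          refine lintegral_mono_ae (ae_restrict_of_ae (hell.mono fun ω h => ?_))
          exact h.1.trans_eq (by rw [hmap])
      _ = ENNReal.ofReal C * μ (X (m+1) ⁻¹' A) * μ U := setLIntegral_const _ _
      _ = ENNReal.ofReal C * (μ (X (m+1) ⁻¹' A) * μ U) := by ring
  · calc μ (X (m+1) ⁻¹' A) * μ U = ∫⁻ _ in U, μ (X (m+1) ⁻¹' A) ∂μ := by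
          rw [setLIntegral_const]
      _ ≤ ∫⁻ ω in U, ENNReal.ofReal C * κ m (X m ω) A ∂μ := by
          refine lintegral_mono_ae (ae_restrict_of_ae (hell.mono fun ω h => ?_))
          rw [← hmap]; exact h.2
      _ = ENNReal.ofReal C * ∫⁻ ω in U, κ m (X m ω) A ∂μ := lintegral_const_mul _ hmeasκ
      _ = ENNReal.ofReal C * μ (X (m+1) ⁻¹' A ∩ U) := by rw [← hkey, Set.inter_comm]

/-- Master two-sided comparison for a middle-coordinate event against the σ-algebra
generated by `X_j`, `j ∈ 𝓑`, when `n ∉ 𝓑`. -/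
lemma master_bound (hC : 1 < C) {n : ℕ} (𝓑 : Finset ℕ) (hn : n ∉ 𝓑)
    {A : Set E} (hA : MeasurableSet A) {S : Set Ω} (hS : MeasurableSet[sigmaFinset X 𝓑] S) :
    μ (X n ⁻¹' A ∩ S) ≤ (ENNReal.ofReal C)^3 * μ (X n ⁻¹' A) * μ S ∧
      μ (X n ⁻¹' A) * μ S ≤ (ENNReal.ofReal C)^3 * μ (X n ⁻¹' A ∩ S) := by
  haveI := hprob
  have hc1 : (1 : ℝ≥0∞) ≤ ENNReal.ofReal C := by
    rw [show (1:ℝ≥0∞) = ENNReal.ofReal 1 by simp]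
    exact ENNReal.ofReal_le_ofReal hC.le
  set Pf : Finset ℕ := 𝓑.filter (· < n) with hPfdef
  set Tf : Finset ℕ := 𝓑.filter (n < ·) with hTfdef
  have hTf : ∀ j ∈ Tf, n < j := fun j hj => (Finset.mem_filter.mp hj).2
  have hPfn : ∀ j ∈ Pf, j < n := fun j hj => (Finset.mem_filter.mp hj).2
  have hsplit : sigmaFinset X 𝓑 =
      (⨆ j ∈ Pf, MeasurableSpace.comap (X j) inferInstance) ⊔
        (⨆ j ∈ Tf, MeasurableSpace.comap (X j) inferInstance) := by
    refine le_antisymm ?_ ?_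
    · refine iSup₂_le fun j hj => ?_
      rcases lt_trichotomy j n with hlt | rfl | hgt
      · exact le_trans (le_iSup₂ (f := fun j (_ : j ∈ Pf) =>
          MeasurableSpace.comap (X j) (inferInstance : MeasurableSpace E)) j
          (Finset.mem_filter.mpr ⟨hj, hlt⟩)) le_sup_left
      · exact absurd hj hn
      · exact le_trans (le_iSup₂ (f := fun j (_ : j ∈ Tf) =>
          MeasurableSpace.comap (X j) (inferInstance : MeasurableSpace E)) j
          (Finset.mem_filter.mpr ⟨hj, hgt⟩)) le_sup_right
    · refine sup_le (iSup₂_le fun j hj => ?_) (iSup₂_le fun j hj => ?_) <;>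
        exact le_iSup₂ (f := fun j (_ : j ∈ 𝓑) =>
          MeasurableSpace.comap (X j) (inferInstance : MeasurableSpace E)) j
          (Finset.mem_filter.mp hj).1
  have hm₁ : (⨆ j ∈ Pf, MeasurableSpace.comap (X j) inferInstance : MeasurableSpace Ω)
      ≤ ‹MeasurableSpace Ω› := iSup₂_le fun j _ => (hX j).comap_le
  have hm₂ : (⨆ j ∈ Tf, MeasurableSpace.comap (X j) inferInstance : MeasurableSpace Ω)
      ≤ ‹MeasurableSpace Ω› := iSup₂_le fun j _ => (hX j).comap_le
  have hm₁Ft : (⨆ j ∈ Pf, MeasurableSpace.comap (X j) inferInstance : MeasurableSpace Ω)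
      ≤ Ft X n := iSup₂_le fun j hj => comap_le_Ft (le_of_lt (hPfn j hj))
  rw [hsplit] at hS
  refine product_extension hm₁ hm₂ μ ((hX n) hA) (by simp) ?_ hS
  intro U V hU hV
  set c : ℝ≥0∞ := ENNReal.ofReal C with hcdef
  set A' : Set Ω := X n ⁻¹' A with hA'def
  -- past comparison: μ (A' ∩ U) vs μ A' * μ U
  have hpast : μ (A' ∩ U) ≤ c * (μ A' * μ U) ∧ μ A' * μ U ≤ c * μ (A' ∩ U) := by
    rcases Nat.eq_zero_or_eq_succ_pred n with hn0 | hnsucc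
    · -- n = 0 : no past coordinates, U = ∅ or univ
      have hPfe : Pf = ∅ := by
        rw [hPfdef]
        refine Finset.filter_eq_empty_iff.mpr fun j _ => by omega
      rw [hPfe] at hU
      have : MeasurableSet[(⊥ : MeasurableSpace Ω)] U := by
        have h : (⨆ j ∈ (∅ : Finset ℕ), MeasurableSpace.comap (X j) inferInstance : MeasurableSpace Ω) = ⊥ := by simp
        rwa [h] at hU
      rcases MeasurableSpace.measurableSet_bot_iff.mp this with rfl | rfl
      · simp
      · constructor
        · calc μ (A' ∩ Set.univ) = 1 * (μ A' * μ Set.univ) := by simp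
            _ ≤ c * (μ A' * μ Set.univ) := mul_le_mul_left hc1 _
        · calc μ A' * μ Set.univ = 1 * μ (A' ∩ Set.univ) := by simp
            _ ≤ c * μ (A' ∩ Set.univ) := mul_le_mul_left hc1 _
    · obtain ⟨m, rfl⟩ : ∃ m, n = m + 1 := ⟨n - 1, hnsucc⟩
      have hUFm : MeasurableSet[Ft X m] U :=
        (iSup₂_le fun j hj => comap_le_Ft (by have := hPfn j hj; omega)) U hU
      exact past_bound hprob hX hκ hM hEll hA hUFm
  have hAU : MeasurableSet[Ft X n] (A' ∩ U) :=
    (measurableSet_preimage_Ft le_rfl hA).inter (hm₁Ft U hU)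
  have hUFt : MeasurableSet[Ft X n] U := hm₁Ft U hU
  have hfut1 := fut_bound hprob hX hκ hM hEll Tf hTf hV hAU
  have hfut2 := fut_bound hprob hX hκ hM hEll Tf hTf hV hUFt
  constructor
  · calc μ (A' ∩ (U ∩ V)) = μ ((A' ∩ U) ∩ V) := by rw [Set.inter_assoc]
      _ ≤ c * (μ (A' ∩ U) * μ V) := hfut1.1
      _ ≤ c * ((c * (μ A' * μ U)) * μ V) :=
          mul_le_mul_right (mul_le_mul_left hpast.1 _) c
      _ = c * c * μ A' * (μ U * μ V) := by ring
      _ ≤ c * c * μ A' * (c * μ (U ∩ V)) := mul_le_mul_right hfut2.2 _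
      _ = c^3 * μ A' * μ (U ∩ V) := by ring
  · calc μ A' * μ (U ∩ V) ≤ μ A' * (c * (μ U * μ V)) := mul_le_mul_right hfut2.1 _
      _ = c * (μ A' * μ U) * μ V := by ring
      _ ≤ c * (c * μ (A' ∩ U)) * μ V :=
          mul_le_mul_left (mul_le_mul_right hpast.2 _) _
      _ = c * c * (μ (A' ∩ U) * μ V) := by ring
      _ ≤ c * c * (c * μ ((A' ∩ U) ∩ V)) := mul_le_mul_right hfut1.2 _
      _ = c^3 * μ ((A' ∩ U) ∩ V) := by ring
      _ = c^3 * μ (A' ∩ (U ∩ V)) := by rw [Set.inter_assoc]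


end

/-- Threshold argument: from the set comparison, the conditional expectation of an
indicator is a.e. comparable with the measure of the set. -/
lemma condexp_indicator_bound (hprob : IsProbabilityMeasure μ) (hX : ∀ n, Measurable (X n))
    (𝓑 : Finset ℕ) {A' : Set Ω} (hA' : MeasurableSet A') {a : ℝ} (ha : 1 ≤ a)
    (hcomp : ∀ S : Set Ω, MeasurableSet[sigmaFinset X 𝓑] S →
      μ (A' ∩ S) ≤ ENNReal.ofReal a * μ A' * μ S ∧
      μ A' * μ S ≤ ENNReal.ofReal a * μ (A' ∩ S)) :
    ∀ᵐ ω ∂μ, a⁻¹ * (μ A').toReal ≤ (μ[A'.indicator (fun _ => (1:ℝ)) | sigmaFinset X 𝓑]) ω ∧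
      (μ[A'.indicator (fun _ => (1:ℝ)) | sigmaFinset X 𝓑]) ω ≤ a * (μ A').toReal := by
  haveI := hprob
  have ha0 : 0 < a := lt_of_lt_of_le one_pos ha
  have h𝓔 : sigmaFinset X 𝓑 ≤ ‹MeasurableSpace Ω› := iSup₂_le fun j _ => (hX j).comap_le
  haveI : SigmaFinite (μ.trim h𝓔) := by
    haveI : IsFiniteMeasure (μ.trim h𝓔) := isFiniteMeasure_trim h𝓔
    infer_instance
  set g : Ω → ℝ := μ[A'.indicator (fun _ => (1:ℝ)) | sigmaFinset X 𝓑] with hgdef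
  have hint : Integrable (A'.indicator fun _ => (1:ℝ)) μ := (integrable_const 1).indicator hA'
  have hgmeas : Measurable[sigmaFinset X 𝓑] g :=
    stronglyMeasurable_condExp.measurable
  have hsetint : ∀ S : Set Ω, MeasurableSet[sigmaFinset X 𝓑] S →
      ∫ ω in S, g ω ∂μ = (μ (A' ∩ S)).toReal := by
    intro S hS
    rw [hgdef, setIntegral_condExp h𝓔 hint hS]
    have h1 : ∫ ω in S, A'.indicator (fun _ => (1:ℝ)) ω ∂μ = ((μ.restrict S) A').toReal :=
      integral_indicator_one hA'
    rw [h1, Measure.restrict_apply hA']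
  have htofin : ∀ S : Set Ω, (ENNReal.ofReal a * μ A' * μ S).toReal
      = a * (μ A').toReal * (μ S).toReal := by
    intro S
    rw [ENNReal.toReal_mul, ENNReal.toReal_mul, ENNReal.toReal_ofReal ha0.le]
  -- upper thresholds
  have hup : ∀ q : ℚ, a * (μ A').toReal < (q:ℝ) → μ {ω | (q:ℝ) < g ω} = 0 := by
    intro q hq
    set S := {ω | (q:ℝ) < g ω} with hSdef
    have hS : MeasurableSet[sigmaFinset X 𝓑] S := measurableSet_lt measurable_const hgmeas
    by_contra hne
    have hpos : 0 < (μ S).toReal := ENNReal.toReal_pos hne (measure_ne_top μ S)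
    have h1 : (q:ℝ) * (μ S).toReal ≤ ∫ ω in S, g ω ∂μ := by
      have := setIntegral_mono_on (integrable_const (q:ℝ)).integrableOn
        integrable_condExp.integrableOn (h𝓔 _ hS) (fun x hx => le_of_lt hx)
      rwa [setIntegral_const, smul_eq_mul, mul_comm (μ.real S) (q:ℝ)] at this
    have h2 : ∫ ω in S, g ω ∂μ ≤ a * (μ A').toReal * (μ S).toReal := by
      rw [hsetint S hS, ← htofin S]
      refine ENNReal.toReal_mono ?_ (hcomp S hS).1
      exact ENNReal.mul_ne_top (ENNReal.mul_ne_top ENNReal.ofReal_ne_top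
        (measure_ne_top _ _)) (measure_ne_top _ _)
    nlinarith
  have hlo : ∀ q : ℚ, (q:ℝ) < a⁻¹ * (μ A').toReal → μ {ω | g ω < (q:ℝ)} = 0 := by
    intro q hq
    set S := {ω | g ω < (q:ℝ)} with hSdef
    have hS : MeasurableSet[sigmaFinset X 𝓑] S := measurableSet_lt hgmeas measurable_const
    by_contra hne
    have hpos : 0 < (μ S).toReal := ENNReal.toReal_pos hne (measure_ne_top μ S)
    have h1 : ∫ ω in S, g ω ∂μ ≤ (q:ℝ) * (μ S).toReal := by
      have := setIntegral_mono_on integrable_condExp.integrableOn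
        (integrable_const (q:ℝ)).integrableOn (h𝓔 _ hS) (fun x hx => le_of_lt hx)
      rwa [setIntegral_const, smul_eq_mul, mul_comm (μ.real S) (q:ℝ)] at this
    have h2 : a⁻¹ * ((μ A').toReal * (μ S).toReal) ≤ ∫ ω in S, g ω ∂μ := by
      rw [hsetint S hS]
      rw [inv_mul_le_iff₀ ha0]
      have h3 : (μ A' * μ S).toReal ≤ (ENNReal.ofReal a * μ (A' ∩ S)).toReal := by
        refine ENNReal.toReal_mono ?_ (hcomp S hS).2
        exact ENNReal.mul_ne_top ENNReal.ofReal_ne_top (measure_ne_top _ _)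
      rw [ENNReal.toReal_mul, ENNReal.toReal_mul, ENNReal.toReal_ofReal ha0.le] at h3
      linarith
    have hAS : (μ A').toReal * (μ S).toReal ≥ 0 := by positivity
    nlinarith
  have hup_ae : ∀ᵐ ω ∂μ, g ω ≤ a * (μ A').toReal := by
    rw [ae_iff]
    refine measure_mono_null ?_
      (measure_iUnion_null (ι := {q : ℚ // a * (μ A').toReal < (q:ℝ)})
        fun q => hup q q.2)
    intro ω hω
    simp only [Set.mem_setOf_eq, not_le] at hω
    obtain ⟨q, hq1, hq2⟩ := exists_rat_btwn hω
    exact Set.mem_iUnion.mpr ⟨⟨q, hq1⟩, hq2⟩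
  have hlo_ae : ∀ᵐ ω ∂μ, a⁻¹ * (μ A').toReal ≤ g ω := by
    rw [ae_iff]
    refine measure_mono_null ?_
      (measure_iUnion_null (ι := {q : ℚ // (q:ℝ) < a⁻¹ * (μ A').toReal})
        fun q => hlo q q.2)
    intro ω hω
    simp only [Set.mem_setOf_eq, not_le] at hω
    obtain ⟨q, hq1, hq2⟩ := exists_rat_btwn hω
    exact Set.mem_iUnion.mpr ⟨⟨q, hq2⟩, hq1⟩
  filter_upwards [hup_ae, hlo_ae] with ω h1 h2
  exact ⟨h2, h1⟩


end Chain

lemma secondLargest_le_mul {ι : Type*} [Finite ι] [Nontrivial ι] {x y : ι → ℝ} {a : ℝ}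
    (ha : 0 ≤ a) (h : ∀ j, x j ≤ a * y j) : secondLargest x ≤ a * secondLargest y := by
  obtain ⟨j₀, hj₀⟩ := Finite.exists_min (fun j => sSup (y '' {j}ᶜ))
  have hbddy : ∀ j : ι, BddAbove (y '' {j}ᶜ) := fun j => ((Set.toFinite _).image _).bddAbove
  have hne : ∀ j : ι, (({j}ᶜ : Set ι)).Nonempty := fun j => by
    obtain ⟨k, hk⟩ := exists_ne j
    exact ⟨k, hk⟩
  have h1 : secondLargest x ≤ sSup (x '' {j₀}ᶜ) :=
    ciInf_le (Set.Finite.bddBelow (Set.finite_range _)) j₀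
  have h2 : sSup (x '' {j₀}ᶜ) ≤ a * sSup (y '' {j₀}ᶜ) := by
    refine csSup_le ((hne j₀).image _) ?_
    rintro z ⟨j, hj, rfl⟩
    exact (h j).trans (mul_le_mul_of_nonneg_left (le_csSup (hbddy j₀) ⟨j, hj, rfl⟩) ha)
  have h3 : sSup (y '' {j₀}ᶜ) = secondLargest y :=
    le_antisymm (le_ciInf fun j => hj₀ j)
      (ciInf_le (Set.Finite.bddBelow (Set.finite_range _)) j₀)
  calc secondLargest x ≤ sSup (x '' {j₀}ᶜ) := h1
    _ ≤ a * sSup (y '' {j₀}ᶜ) := h2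
    _ = a * secondLargest y := by rw [h3]


/-- Lemma 3.8(ii). There exists `A ≥ 1`, depending only on `K` and the
ellipticity constant `C`, such that for every integer `m ≥ 2`, every `𝓑 ⊆ {1,…,N}`,
`𝓔 = σ(X_n : n ∈ 𝓑)`, every `n ∉ 𝓑` and a.e. sample point,
`A⁻¹ q_n(m) ≤ q_n(m | 𝓔) ≤ A q_n(m)`. -/
theorem conditional_q_comparable (C : ℝ) (hC : 1 < C) (K : ℕ) (hK : 1 ≤ K) :
    ∃ A : ℝ, 1 ≤ A ∧
      ∀ (Ω E : Type) [MeasurableSpace Ω] [MeasurableSpace E]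
        (μ : Measure Ω) (X : ℕ → Ω → E) (κ : ℕ → Kernel E E) (f : ℕ → E → ℤ),
        UEChain μ X κ C →
        (∀ n, Measurable (f n)) →
        (∀ n ω, |f n (X n ω)| ≤ (K : ℤ)) →
        ∀ m : ℕ, 2 ≤ m →
          ∀ (N : ℕ) (𝓑 : Finset ℕ), 𝓑 ⊆ Finset.Icc 1 N →
            ∀ n, n ∉ 𝓑 →
              ∀ᵐ ω ∂μ,
                A⁻¹ * qres μ X f n m ≤ condQres μ X f (sigmaFinset X 𝓑) n m ω ∧
                condQres μ X f (sigmaFinset X 𝓑) n m ω ≤ A * qres μ X f n m := by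
  refine ⟨C^3, one_le_pow₀ hC.le, ?_⟩
  intro Ω E _ _ μ X κ f hchain hf hbd m hm N 𝓑 h𝓑 n hn
  obtain ⟨hprob, hX, hκ, hM, hEll⟩ := hchain
  haveI := hprob
  have hC3 : (1:ℝ) ≤ C^3 := one_le_pow₀ hC.le
  have hC3pos : (0:ℝ) < C^3 := lt_of_lt_of_le one_pos hC3
  -- the residue sets
  haveI : NeZero m := ⟨by omega⟩
  set B : ZMod m → Set E := fun j => {e | ((f n e : ZMod m)) = j} with hBdef
  have hBmeas : ∀ j, MeasurableSet (B j) := by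
    intro j
    have : B j = f n ⁻¹' {z : ℤ | ((z : ZMod m)) = j} := rfl
    rw [this]
    exact (hf n) (by trivial)
  have hset : ∀ j : ZMod m, {ω | ((f n (X n ω) : ZMod m)) = j} = X n ⁻¹' (B j) := fun j => rfl
  -- per-residue a.e. comparison
  have hper : ∀ j : ZMod m, ∀ᵐ ω ∂μ,
      (C^3)⁻¹ * (μ (X n ⁻¹' B j)).toReal ≤
        (μ[(X n ⁻¹' B j).indicator (fun _ => (1:ℝ)) | sigmaFinset X 𝓑]) ω ∧
      (μ[(X n ⁻¹' B j).indicator (fun _ => (1:ℝ)) | sigmaFinset X 𝓑]) ω ≤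
        C^3 * (μ (X n ⁻¹' B j)).toReal := by
    intro j
    refine condexp_indicator_bound hprob hX 𝓑 ((hX n) (hBmeas j)) hC3 ?_
    intro S hS
    have := master_bound hprob hX hκ hM hEll hC 𝓑 hn (hBmeas j) hS
    rwa [← ENNReal.ofReal_pow (le_of_lt (lt_trans one_pos hC))] at this
  rw [← ae_all_iff] at hper
  filter_upwards [hper] with ω hω
  haveI : Nontrivial (ZMod m) := by
    refine Fintype.one_lt_card_iff_nontrivial.mp ?_
    rw [ZMod.card]
    omega
  set p : ZMod m → ℝ := fun j => (μ {ω' | ((f n (X n ω') : ZMod m)) = j}).toReal with hpdef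
  set r : ZMod m → ℝ := fun j =>
    (μ[Set.indicator {ω' | ((f n (X n ω') : ZMod m)) = j} (fun _ => (1:ℝ)) |
      sigmaFinset X 𝓑]) ω with hrdef
  have hpr : ∀ j, r j ≤ C^3 * p j := fun j => (hω j).2
  have hrp : ∀ j, p j ≤ C^3 * r j := by
    intro j
    have h := (hω j).1
    rw [inv_mul_le_iff₀ hC3pos] at h
    exact h
  have key1 : condQres μ X f (sigmaFinset X 𝓑) n m ω ≤ C^3 * qres μ X f n m :=
    secondLargest_le_mul hC3pos.le hpr
  have key2 : qres μ X f n m ≤ C^3 * condQres μ X f (sigmaFinset X 𝓑) n m ω :=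
    secondLargest_le_mul hC3pos.le hrp
  refine ⟨?_, key1⟩
  rw [inv_mul_le_iff₀ hC3pos]
  exact key2



end EdgeworthMC
end
end

section
/- If Z is an integer-valued random variable with ||Z||_{L∞} ≤ K, and q(Z) denotes the probability that Z takes its second most likely value, then q(Z)/4 ≤ Var(Z) ≤ 8K³ q(Z). -/
open MeasureTheory ProbabilityTheory

noncomputable section

namespace EdgeworthMC

/-- The probability that the integer-valued random variable `Z` takes its second most
likely value (with multiplicity): `q(Z) = min_j max_{i ≠ j} ℙ(Z = i)`. -/
def secondLargestProb {Ω : Type*} [MeasurableSpace Ω] (μ : Measure Ω) (Z : Ω → ℤ) : ℝ :=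
  ⨅ j : ℤ, sSup ((fun i : ℤ => (μ {ω | Z ω = i}).toReal) '' {j}ᶜ)

/-- inequality (3.9) of the paper. If `Z` is an integer-valued random
variable with `‖Z‖_{L^∞} ≤ K` and `q(Z)` is the probability that `Z` takes its second most
likely value, then `q(Z)/4 ≤ Var(Z) ≤ 8K³ q(Z)`. -/
theorem variance_comparable_secondLargestProb
    {Ω : Type*} [MeasurableSpace Ω] (μ : Measure Ω) [IsProbabilityMeasure μ]
    (Z : Ω → ℤ) (hZ : Measurable Z) (K : ℝ) (hK : ∀ ω, |(Z ω : ℝ)| ≤ K) :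
    secondLargestProb μ Z / 4 ≤ variance (fun ω => ((Z ω : ℝ))) μ ∧
    variance (fun ω => ((Z ω : ℝ))) μ ≤ 8 * K ^ 3 * secondLargestProb μ Z := by
  classical
  -- basic setup
  have hΩ : Nonempty Ω := by
    by_contra h
    rw [not_nonempty_iff] at h
    have h1 : μ Set.univ = 1 := measure_univ
    rw [show (Set.univ : Set Ω) = ∅ from Set.eq_empty_of_isEmpty _, measure_empty] at h1
    exact zero_ne_one h1
  obtain ⟨ω₀⟩ := hΩ
  have hK0 : 0 ≤ K := le_trans (abs_nonneg _) (hK ω₀)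
  set X : Ω → ℝ := fun ω => ((Z ω : ℝ)) with hX
  set p : ℤ → ℝ := fun i => (μ {ω | Z ω = i}).toReal with hp
  have hmeas : ∀ i : ℤ, MeasurableSet {ω | Z ω = i} := fun i => hZ (measurableSet_singleton i)
  have hp0 : ∀ i, 0 ≤ p i := fun i => ENNReal.toReal_nonneg
  have hp1 : ∀ i, p i ≤ 1 := by
    intro i
    have := prob_le_one (μ := μ) (s := {ω | Z ω = i})
    exact ENNReal.toReal_le_of_le_ofReal zero_le_one (by simpa using this)
  -- support
  set S : Finset ℤ := Finset.Icc (-⌊K⌋) ⌊K⌋ with hS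
  have hZS : ∀ ω, Z ω ∈ S := by
    intro ω
    have h := abs_le.1 (hK ω)
    rw [hS, Finset.mem_Icc]
    constructor
    · rw [neg_le]
      exact Int.le_floor.2 (by push_cast; linarith [h.1])
    · exact Int.le_floor.2 h.2
  have hSne : S.Nonempty := ⟨Z ω₀, hZS ω₀⟩
  -- mode
  obtain ⟨m, hmS, hm⟩ := S.exists_max_image p hSne
  have hmax : ∀ i, p i ≤ p m := by
    intro i
    by_cases hi : i ∈ S
    · exact hm i hi
    · have : {ω | Z ω = i} = ∅ := by
        ext ω; simp only [Set.mem_setOf_eq, Set.mem_empty_iff_false, iff_false]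
        intro h; exact hi (h ▸ hZS ω)
      simp only [hp, this, measure_empty, ENNReal.toReal_zero]
      exact hp0 m
  -- bddAbove
  have hbdd : ∀ j : ℤ, BddAbove ((fun i : ℤ => (μ {ω | Z ω = i}).toReal) '' {j}ᶜ) := by
    intro j
    refine ⟨1, ?_⟩
    rintro x ⟨i, -, rfl⟩
    exact hp1 i
  have hne : ∀ j : ℤ, ((fun i : ℤ => (μ {ω | Z ω = i}).toReal) '' {j}ᶜ).Nonempty := by
    intro j
    exact ⟨p (j + 1), ⟨j + 1, by simp, rfl⟩⟩
  set q : ℝ := secondLargestProb μ Z with hq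
  have hq_nonneg : 0 ≤ q := by
    rw [hq, secondLargestProb]
    refine le_ciInf fun j => Real.sSup_nonneg ?_
    rintro x ⟨i, -, rfl⟩
    exact hp0 i
  -- Lemma A : p i ≤ q for i ≠ m
  have hA : ∀ i : ℤ, i ≠ m → p i ≤ q := by
    intro i him
    rw [hq, secondLargestProb]
    refine le_ciInf fun j => ?_
    by_cases hij : i = j
    · subst hij
      calc p i ≤ p m := hmax i
        _ ≤ _ := le_csSup (hbdd i) ⟨m, by simpa using fun h => him h.symm, rfl⟩
    · exact le_csSup (hbdd j) ⟨i, by simpa using hij, rfl⟩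
  -- Lemma B : q ≤ ℙ(Z ≠ n)
  have hB : ∀ n : ℤ, q ≤ (μ {ω | Z ω ≠ n}).toReal := by
    intro n
    have h1 : q ≤ sSup ((fun i : ℤ => (μ {ω | Z ω = i}).toReal) '' {n}ᶜ) := by
      rw [hq, secondLargestProb]
      refine ciInf_le ⟨0, ?_⟩ n
      rintro x ⟨j, rfl⟩
      exact Real.sSup_nonneg (by rintro y ⟨i, -, rfl⟩; exact hp0 i)
    refine h1.trans (Real.sSup_le ?_ ENNReal.toReal_nonneg)
    rintro x ⟨i, hin, rfl⟩
    refine ENNReal.toReal_mono (measure_ne_top μ _) (measure_mono ?_)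
    intro ω hω
    simp only [Set.mem_setOf_eq] at hω ⊢
    rw [hω]; simpa using hin
  -- integrability facts
  have hXm : Measurable X := measurable_from_top.comp hZ
  have hmem : MemLp X 2 μ :=
    MemLp.of_bound hXm.aestronglyMeasurable K (ae_of_all _ fun ω => by
      simpa [Real.norm_eq_abs] using hK ω)
  have hXint : Integrable X μ := hmem.integrable one_le_two
  have hsqint : ∀ c : ℝ, Integrable (fun ω => (X ω - c) ^ 2) μ := by
    intro c
    have := (hmem.sub (memLp_const c)).integrable_sq
    simpa [Pi.sub_apply] using this
  have hvar_eq : variance X μ = ∫ ω, (X ω - ∫ ω', X ω' ∂μ) ^ 2 ∂μ := by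
    rw [variance_eq_integral hXm.aemeasurable]
  constructor
  · -- lower bound
    set M : ℝ := ∫ ω', X ω' ∂μ with hM
    set n : ℤ := round M with hn
    have hhalf : ∀ ω, Z ω ≠ n → (1 : ℝ) / 4 ≤ (X ω - M) ^ 2 := by
      intro ω hωn
      have h1 : (1 : ℝ) ≤ |X ω - (n : ℝ)| := by
        have : (1 : ℤ) ≤ |Z ω - n| := Int.one_le_abs (sub_ne_zero.2 hωn)
        calc (1 : ℝ) = ((1 : ℤ) : ℝ) := by norm_num
          _ ≤ ((|Z ω - n| : ℤ) : ℝ) := by exact_mod_cast this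
          _ = |X ω - (n : ℝ)| := by push_cast; rfl
      have h2 : |M - (n : ℝ)| ≤ 1 / 2 := by
        simpa [hn] using abs_sub_round M
      have h3 : (1 : ℝ) / 2 ≤ |X ω - M| := by
        have := abs_sub_abs_le_abs_sub (X ω - (n : ℝ)) (M - (n : ℝ))
        have h4 : X ω - (n : ℝ) - (M - (n : ℝ)) = X ω - M := by ring
        rw [h4] at this
        linarith
      calc (1 : ℝ) / 4 = (1 / 2 : ℝ) ^ 2 := by norm_num
        _ ≤ |X ω - M| ^ 2 := by apply pow_le_pow_left₀ (by norm_num) h3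
        _ = (X ω - M) ^ 2 := sq_abs _
    have hsmeas : MeasurableSet {ω | Z ω ≠ n} := (hmeas n).compl
    have hind : ∫ ω, Set.indicator {ω | Z ω ≠ n} (fun _ => (1 : ℝ) / 4) ω ∂μ
        = (μ {ω | Z ω ≠ n}).toReal * (1 / 4) := by
      rw [integral_indicator_const _ hsmeas]; simp [smul_eq_mul, Measure.real]
    have hmono : ∫ ω, Set.indicator {ω | Z ω ≠ n} (fun _ => (1 : ℝ) / 4) ω ∂μ
        ≤ ∫ ω, (X ω - M) ^ 2 ∂μ := by
      refine integral_mono ((integrable_const _).indicator hsmeas) (hsqint M) ?_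
      intro ω
      by_cases hω : Z ω ≠ n
      · rw [Set.indicator_of_mem (show ω ∈ {ω | Z ω ≠ n} from hω)]
        exact hhalf ω hω
      · rw [Set.indicator_of_notMem (show ω ∉ {ω | Z ω ≠ n} from hω)]
        positivity
    have hfinal : q / 4 ≤ ∫ ω, (X ω - M) ^ 2 ∂μ := by
      have := hB n
      rw [hind] at hmono
      nlinarith [ENNReal.toReal_nonneg (a := μ {ω | Z ω ≠ n})]
    rw [hvar_eq]
    exact hfinal
  · -- upper bound
    -- step 1 : Var ≤ ∫ (X - m)^2
    have hexpand : ∀ c : ℝ, ∫ ω, (X ω - c) ^ 2 ∂μ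
        = (∫ ω, X ω ^ 2 ∂μ) - 2 * c * (∫ ω, X ω ∂μ) + c ^ 2 := by
      intro c
      have h1 : (fun ω => (X ω - c) ^ 2) = fun ω => (X ω ^ 2 - 2 * c * X ω) + c ^ 2 := by
        funext ω; ring
      have hint1 : Integrable (fun ω => X ω ^ 2 - 2 * c * X ω) μ :=
        (hmem.integrable_sq).sub (hXint.const_mul _)
      rw [h1, integral_add hint1 (integrable_const _),
        integral_sub hmem.integrable_sq (hXint.const_mul _), integral_const_mul, integral_const]
      simp [measure_univ]
    have hvar' : variance X μ = (∫ ω, X ω ^ 2 ∂μ) - (∫ ω, X ω ∂μ) ^ 2 := by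
      rw [variance_eq_sub hmem]
      rfl
    have hstep1 : variance X μ ≤ ∫ ω, (X ω - (m : ℝ)) ^ 2 ∂μ := by
      rw [hvar', hexpand]
      nlinarith [sq_nonneg ((∫ ω, X ω ∂μ) - (m : ℝ))]
    -- step 2 : ∫ (X - m)^2 ≤ 4 K^2 * ℙ(Z ≠ m)
    have hmK : |(m : ℝ)| ≤ K := by
      rw [hS, Finset.mem_Icc] at hmS
      rw [abs_le]
      constructor
      · have : (-⌊K⌋ : ℝ) ≤ (m : ℝ) := by exact_mod_cast hmS.1
        have hf : (⌊K⌋ : ℝ) ≤ K := Int.floor_le K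
        linarith
      · have : (m : ℝ) ≤ (⌊K⌋ : ℝ) := by exact_mod_cast hmS.2
        linarith [Int.floor_le K]
    have hsmeas' : MeasurableSet {ω | Z ω ≠ m} := (hmeas m).compl
    have hstep2 : ∫ ω, (X ω - (m : ℝ)) ^ 2 ∂μ
        ≤ 4 * K ^ 2 * (μ {ω | Z ω ≠ m}).toReal := by
      have hmono : ∫ ω, (X ω - (m : ℝ)) ^ 2 ∂μ
          ≤ ∫ ω, Set.indicator {ω | Z ω ≠ m} (fun _ => 4 * K ^ 2) ω ∂μ := by
        refine integral_mono (hsqint _) ((integrable_const _).indicator hsmeas') ?_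
        intro ω
        by_cases hω : Z ω ≠ m
        · rw [Set.indicator_of_mem (show ω ∈ {ω | Z ω ≠ m} from hω)]
          show (X ω - (m : ℝ)) ^ 2 ≤ 4 * K ^ 2
          have hXZ : X ω = ((Z ω : ℝ)) := rfl
          rw [hXZ]
          have h1 := hK ω
          have h2 := abs_le.1 h1
          have h3 := abs_le.1 hmK
          nlinarith
        · rw [Set.indicator_of_notMem (show ω ∉ {ω | Z ω ≠ m} from hω)]
          push_neg at hω
          simp [hX, hω]
      rw [integral_indicator_const _ hsmeas'] at hmono
      calc ∫ ω, (X ω - (m : ℝ)) ^ 2 ∂μ ≤ (μ {ω | Z ω ≠ m}).toReal • (4 * K ^ 2) := hmono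
        _ = 4 * K ^ 2 * (μ {ω | Z ω ≠ m}).toReal := by rw [smul_eq_mul]; ring
    -- step 3 : ℙ(Z ≠ m) ≤ 2 K q
    have hstep3 : (μ {ω | Z ω ≠ m}).toReal ≤ 2 * K * q := by
      have hunion : {ω | Z ω ≠ m} = ⋃ i ∈ S.erase m, {ω | Z ω = i} := by
        ext ω
        simp only [Set.mem_setOf_eq, Set.mem_iUnion]
        constructor
        · intro h
          exact ⟨Z ω, Finset.mem_erase.2 ⟨h, hZS ω⟩, rfl⟩
        · rintro ⟨i, hi, rfl⟩
          exact (Finset.mem_erase.1 hi).1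
      have hdisj : (↑(S.erase m) : Set ℤ).PairwiseDisjoint fun i => {ω | Z ω = i} := by
        intro i _ j _ hij
        refine Set.disjoint_left.2 fun ω h1 h2 => ?_
        exact hij (by rw [← h1, ← h2])
      have hmeasure : μ {ω | Z ω ≠ m} = ∑ i ∈ S.erase m, μ {ω | Z ω = i} := by
        rw [hunion, measure_biUnion_finset hdisj fun i _ => hmeas i]
      have htoReal : (μ {ω | Z ω ≠ m}).toReal = ∑ i ∈ S.erase m, p i := by
        rw [hmeasure, ENNReal.toReal_sum fun i _ => measure_ne_top μ _]
      rw [htoReal]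
      have hsum : ∑ i ∈ S.erase m, p i ≤ (S.erase m).card • q := by
        refine Finset.sum_le_card_nsmul _ _ _ fun i hi => ?_
        exact hA i (Finset.mem_erase.1 hi).1
      have hcard : ((S.erase m).card : ℝ) ≤ 2 * K := by
        have h1 : (S.erase m).card = S.card - 1 := Finset.card_erase_of_mem hmS
        have h2 : S.card = (⌊K⌋ + 1 - (-⌊K⌋)).toNat := Int.card_Icc _ _
        have hfl : (0 : ℤ) ≤ ⌊K⌋ := Int.floor_nonneg.2 hK0
        have h3 : ((S.erase m).card : ℤ) = 2 * ⌊K⌋ := by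
          rw [h1, h2]
          have : (⌊K⌋ + 1 - (-⌊K⌋)) = 2 * ⌊K⌋ + 1 := by ring
          rw [this]
          omega
        have h4 : ((S.erase m).card : ℝ) = 2 * (⌊K⌋ : ℝ) := by exact_mod_cast h3
        rw [h4]
        linarith [Int.floor_le K]
      calc ∑ i ∈ S.erase m, p i ≤ (S.erase m).card • q := hsum
        _ = ((S.erase m).card : ℝ) * q := by rw [nsmul_eq_mul]
        _ ≤ 2 * K * q := by nlinarith
    calc variance X μ ≤ ∫ ω, (X ω - (m : ℝ)) ^ 2 ∂μ := hstep1
      _ ≤ 4 * K ^ 2 * (μ {ω | Z ω ≠ m}).toReal := hstep2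
      _ ≤ 4 * K ^ 2 * (2 * K * q) := by
          have : (0 : ℝ) ≤ 4 * K ^ 2 := by positivity
          exact mul_le_mul_of_nonneg_left hstep3 this
      _ = 8 * K ^ 3 * q := by ring

end EdgeworthMC
end
end
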